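/- arXiv:2212.10643 — 4 statements merged into one kernel-verified Lean document; each statement's English description precedes it below -/
import Mathlib

section
/- Let G be a simple graph with maximum degree at most 3 and let φ be a proper coloring of G. Then φ is a proper coloring of the square G² (i.e., φ assigns distinct colors to any two distinct vertices at distance at most 2 in G) if and only if φ is a 2-PCF coloring of G, i.e., for every vertex v at least min{2, d_G(v)} colors appear on exactly one neighbor of v. -/
/-- An `h`-PCF coloring of `G`: a proper coloring `φ` such that for every vertex `v`,
at least `min h (d_G(v))` colors appear on exactly one neighbor of `v`. -/
def SimpleGraph.IsPCFColoring {V α : Type*} (G : SimpleGraph V) (h : ℕ)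
    (φ : V → α) : Prop :=
  (∀ ⦃u w : V⦄, G.Adj u w → φ u ≠ φ w) ∧
  ∀ v : V, min h {u | G.Adj v u}.ncard ≤
    {c : α | {u | G.Adj v u ∧ φ u = c}.ncard = 1}.ncard

/-- `G` admits an `h`-PCF `k`-coloring. -/
def SimpleGraph.HasPCFColoring {V : Type*} (G : SimpleGraph V) (h k : ℕ) : Prop :=
  ∃ φ : V → Fin k, G.IsPCFColoring h φ

/-- The `S`-reduced graph `G*S`: delete `S`, and join two distinct nonadjacent
vertices outside `S` that have a common neighbor in `S` (vertices of `S`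
remain as isolated vertices). -/
def SimpleGraph.reduce {V : Type*} (G : SimpleGraph V) (S : Set V) :
    SimpleGraph V where
  Adj u w := u ∉ S ∧ w ∉ S ∧ u ≠ w ∧
    (G.Adj u w ∨ ∃ s ∈ S, G.Adj u s ∧ G.Adj s w)
  symm := by
    constructor
    rintro u w ⟨hu, hw, hne, h | ⟨s, hs, h1, h2⟩⟩
    · exact ⟨hw, hu, hne.symm, Or.inl h.symm⟩
    · exact ⟨hw, hu, hne.symm, Or.inr ⟨s, hs, h2.symm, h1.symm⟩⟩
  loopless := ⟨fun u h => h.2.2.1 rfl⟩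

theorem square_coloring_iff_two_pcf {V α : Type*} [Fintype V]
    (G : SimpleGraph V) (φ : V → α)
    (hΔ : ∀ v : V, {u | G.Adj v u}.ncard ≤ 3)
    (hproper : ∀ ⦃u w : V⦄, G.Adj u w → φ u ≠ φ w) :
    (∀ u w : V, u ≠ w → (G.Adj u w ∨ ∃ x : V, G.Adj u x ∧ G.Adj x w) →
      φ u ≠ φ w) ↔ G.IsPCFColoring 2 φ := by
  constructor
  · intro H
    refine ⟨hproper, fun v => ?_⟩
    set N : Set V := {u | G.Adj v u} with hN
    set U : Set α := {c : α | {u | G.Adj v u ∧ φ u = c}.ncard = 1} with hU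
    have hmem : ∀ u ∈ N, φ u ∈ U := by
      intro u hu
      have : {u' | G.Adj v u' ∧ φ u' = φ u} = {u} := by
        ext u'
        simp only [Set.mem_setOf_eq, Set.mem_singleton_iff]
        constructor
        · rintro ⟨ha, hc⟩
          by_contra hne
          exact H u' u hne (Or.inr ⟨v, ha.symm, hu⟩) hc
        · rintro rfl; exact ⟨hu, rfl⟩
      simp [hU, this]
    have hinj : Set.InjOn φ N := by
      intro a ha b hb hab
      by_contra hne
      exact H a b hne (Or.inr ⟨v, ha.symm, hb⟩) hab
    have hUfin : U.Finite := by
      apply (N.toFinite.image φ).subset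
      intro c hc
      obtain ⟨a, ha⟩ := Set.ncard_eq_one.mp hc
      have : a ∈ {u | G.Adj v u ∧ φ u = c} := ha ▸ rfl
      exact ⟨a, this.1, this.2⟩
    calc min 2 N.ncard ≤ N.ncard := min_le_right _ _
      _ ≤ U.ncard := Set.ncard_le_ncard_of_injOn φ hmem hinj hUfin
  · rintro ⟨_, hpcf⟩ u w hne hd heq
    rcases hd with hadj | ⟨x, hux, hxw⟩
    · exact hproper hadj heq
    set N : Set V := {u' | G.Adj x u'} with hN
    set U : Set α := {c : α | {u' | G.Adj x u' ∧ φ u' = c}.ncard = 1} with hU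
    have huN : u ∈ N := hux.symm
    have hwN : w ∈ N := hxw
    have hsub : ({u, w} : Set V) ⊆ N := by
      rintro y (rfl | rfl) <;> assumption
    have hpair : ({u, w} : Set V).ncard = 2 := Set.ncard_pair hne
    have hd2 : 2 ≤ N.ncard := by
      rw [← hpair]; exact Set.ncard_le_ncard hsub N.toFinite
    -- each color in U has a unique representative, not u or w
    have key : ∀ c ∈ U, ∃ y, y ∈ N \ ({u, w} : Set V) ∧ φ y = c := by
      intro c hc
      obtain ⟨a, ha⟩ := Set.ncard_eq_one.mp hc
      have haa : a ∈ {u' | G.Adj x u' ∧ φ u' = c} := ha ▸ rfl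
      refine ⟨a, ⟨haa.1, ?_⟩, haa.2⟩
      rintro (rfl | rfl)
      · -- a = u, so c = φ u, but w also has color φ u = φ w
        have : w ∈ ({a} : Set V) := ha ▸ (⟨hxw, heq.symm ▸ haa.2⟩ :
          w ∈ {u' | G.Adj x u' ∧ φ u' = c})
        exact hne this.symm
      · have : u ∈ ({a} : Set V) := ha ▸ (⟨hux.symm, heq ▸ haa.2⟩ :
          u ∈ {u' | G.Adj x u' ∧ φ u' = c})
        exact hne this
    choose f hf1 hf2 using key
    have hUcard : U.ncard ≤ (N \ ({u, w} : Set V)).ncard := by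
      apply Set.ncard_le_ncard_of_injOn (fun c => if hc : c ∈ U then f c hc else u)
      · intro c hc; simp only [dif_pos hc]; exact hf1 c hc
      · intro a ha b hb hab
        simp only [dif_pos ha, dif_pos hb] at hab
        exact (hf2 a ha).symm.trans ((congrArg φ hab).trans (hf2 b hb))
    have hdiff : (N \ ({u, w} : Set V)).ncard = N.ncard - 2 := by
      rw [Set.ncard_diff hsub, hpair]
    have h3 : N.ncard ≤ 3 := hΔ x
    have hpx : 2 ⊓ N.ncard ≤ U.ncard := hpcf x
    rw [min_eq_left hd2] at hpx
    omega
end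

section
/- Let G be a simple graph with maximum degree at most 4 and let v be a vertex of G with d_G(v) ≤ 2, where S = {v}. If the S-reduced graph G*S admits a 2-PCF 9-coloring, then G admits a 2-PCF 9-coloring. (This is the reduction step showing that a vertex-minimum counterexample has no vertex of degree at most 2.) -/
theorem reduce_deg_le_two_vertex {V : Type*} [Fintype V]
    (G : SimpleGraph V)
    (hΔ : ∀ u : V, {w | G.Adj u w}.ncard ≤ 4)
    (v : V) (hv : {u | G.Adj v u}.ncard ≤ 2)
    (h : (G.reduce {v}).HasPCFColoring 2 9) :
    G.HasPCFColoring 2 9 := by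
  classical
  obtain ⟨φ', hprop', hpcf'⟩ := h
  set N : Set V := {u | G.Adj v u} with hNdef
  set W : Set V := N ∪ ⋃ a ∈ N, ({w | G.Adj a w} \ {v}) with hWdef
  have hNW : N ⊆ W := Set.subset_union_left
  have hnbW : ∀ a ∈ N, {w | G.Adj a w} \ {v} ⊆ W := by
    intro a ha
    have h1 : {w | G.Adj a w} \ {v} ⊆ ⋃ x ∈ N, ({w | G.Adj x w} \ {v}) :=
      Set.subset_biUnion_of_mem (u := fun x => {w | G.Adj x w} \ {v}) ha
    exact h1.trans Set.subset_union_right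
  have hdeg3 : ∀ a : V, a ∈ N → ({w | G.Adj a w} \ {v}).ncard ≤ 3 := by
    intro a ha
    have hvmem : v ∈ {w | G.Adj a w} := (ha : G.Adj v a).symm
    have h1 := Set.ncard_diff_singleton_of_mem hvmem
    have h2 := hΔ a
    omega
  have hWcard : W.ncard ≤ 8 := by
    have hNcases : N = ∅ ∨ (∃ a, N = {a}) ∨ (∃ a b, a ≠ b ∧ N = {a, b}) := by
      rcases Nat.lt_or_ge N.ncard 1 with h0 | h1
      · left
        exact (Set.ncard_eq_zero (Set.toFinite N)).mp (by omega)
      · rcases Nat.lt_or_ge N.ncard 2 with h2 | h3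
        · right; left
          obtain ⟨a, ha⟩ := Set.ncard_eq_one.mp (show N.ncard = 1 by omega)
          exact ⟨a, ha⟩
        · right; right
          have : N.ncard = 2 := le_antisymm hv h3
          obtain ⟨a, b, hab, hN⟩ := Set.ncard_eq_two.mp this
          exact ⟨a, b, hab, hN⟩
    rcases hNcases with hN | ⟨a, hN⟩ | ⟨a, b, hab, hN⟩
    · simp [hWdef, hN]
    · rw [hWdef, hN]
      have := hdeg3 a (by rw [hN]; rfl)
      calc (({a} : Set V) ∪ ⋃ x ∈ ({a} : Set V), ({w | G.Adj x w} \ {v})).ncard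
          ≤ ({a} : Set V).ncard + (⋃ x ∈ ({a} : Set V), ({w | G.Adj x w} \ {v})).ncard :=
            Set.ncard_union_le _ _
        _ ≤ 1 + 3 := by
            simp only [Set.biUnion_singleton, Set.ncard_singleton]
            omega
        _ ≤ 8 := by omega
    · rw [hWdef, hN]
      have ha3 := hdeg3 a (by rw [hN]; left; rfl)
      have hb3 := hdeg3 b (by rw [hN]; right; rfl)
      calc (({a, b} : Set V) ∪ ⋃ x ∈ ({a, b} : Set V), ({w | G.Adj x w} \ {v})).ncard
          ≤ ({a, b} : Set V).ncard + (⋃ x ∈ ({a, b} : Set V), ({w | G.Adj x w} \ {v})).ncard :=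
            Set.ncard_union_le _ _
        _ ≤ 2 + (({w | G.Adj a w} \ {v}) ∪ ({w | G.Adj b w} \ {v})).ncard := by
            rw [Set.biUnion_pair]
            have : ({a, b} : Set V).ncard = 2 := Set.ncard_pair hab
            omega
        _ ≤ 2 + (({w | G.Adj a w} \ {v}).ncard + ({w | G.Adj b w} \ {v}).ncard) := by
            have := Set.ncard_union_le ({w | G.Adj a w} \ {v}) ({w | G.Adj b w} \ {v})
            omega
        _ ≤ 8 := by omega
  have hfree : ∃ c : Fin 9, c ∉ φ' '' W := by
    by_contra hcon
    push_neg at hcon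
    have huniv : (φ' '' W) = Set.univ := Set.eq_univ_of_forall hcon
    have himg : (φ' '' W).ncard ≤ 8 :=
      le_trans (Set.ncard_image_le (Set.toFinite _)) hWcard
    rw [huniv] at himg
    simp [Set.ncard_univ] at himg
  obtain ⟨c, hc⟩ := hfree
  have hcW : ∀ w ∈ W, φ' w ≠ c := fun w hw he => hc ⟨w, hw, he⟩
  set φ : V → Fin 9 := Function.update φ' v c with hφdef
  have hφv : φ v = c := Function.update_self _ _ _
  have hφne : ∀ w : V, w ≠ v → φ w = φ' w := fun w hw => Function.update_of_ne hw _ _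
  have hinjN : ∀ a ∈ N, ∀ b ∈ N, a ≠ b → φ' a ≠ φ' b := by
    intro a ha b hb hab
    exact hprop' ⟨(ha : G.Adj v a).ne', (hb : G.Adj v b).ne', hab,
      Or.inr ⟨v, rfl, (ha : G.Adj v a).symm, (hb : G.Adj v b)⟩⟩
  refine ⟨φ, ?_, ?_⟩
  · -- proper
    intro x y hxy
    by_cases hx : x = v
    · have hvy : G.Adj v y := hx ▸ hxy
      rw [hx, hφv, hφne y hvy.ne']
      exact fun he => hcW y (hNW hvy) he.symm
    · by_cases hy : y = v
      · have hvx : G.Adj v x := (hy ▸ hxy).symm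
        rw [hy, hφne x hx, hφv]
        exact hcW x (hNW hvx)
      · rw [hφne x hx, hφne y hy]
        exact hprop' ⟨hx, hy, hxy.ne, Or.inl hxy⟩
  · -- PCF condition
    intro u
    by_cases hu : u = v
    · rw [hu]
      have himg : φ' '' N ⊆ {c' : Fin 9 | {w | G.Adj v w ∧ φ w = c'}.ncard = 1} := by
        rintro _ ⟨a, ha, rfl⟩
        have hset : {w | G.Adj v w ∧ φ w = φ' a} = {a} := by
          ext w
          simp only [Set.mem_setOf_eq, Set.mem_singleton_iff]
          constructor
          · rintro ⟨hw, hwc⟩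
            by_contra hwa
            exact hinjN w hw a ha hwa (by rw [← hφne w (hw : G.Adj v w).ne']; exact hwc)
          · intro hwa
            refine ⟨?_, ?_⟩
            · rw [hwa]; exact ha
            · rw [hwa]; exact hφne a (ha : G.Adj v a).ne'
        show {w | G.Adj v w ∧ φ w = φ' a}.ncard = 1
        rw [hset, Set.ncard_singleton]
      have hinj' : Set.InjOn φ' N := by
        intro a ha b hb hab
        by_contra hne; exact hinjN a ha b hb hne hab
      calc min 2 {w | G.Adj v w}.ncard ≤ N.ncard := min_le_right _ _
        _ = (φ' '' N).ncard := (Set.ncard_image_of_injOn hinj').symm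
        _ ≤ _ := Set.ncard_le_ncard himg (Set.toFinite _)
    · by_cases huN : G.Adj v u
      · -- u is a neighbor of v
        have hadj_uv : G.Adj u v := huN.symm
        set M : Set V := {w | G.Adj u w} with hMdef
        set M' : Set V := {w | (G.reduce {v}).Adj u w} with hM'def
        set B : Set V := M' \ M with hBdef
        have hvM : v ∈ M := hadj_uv
        have hvM' : v ∉ M' := fun hmem => hmem.2.1 rfl
        have hMsub : M \ {v} ⊆ M' := by
          rintro w ⟨hw, hwv⟩
          exact ⟨hu, hwv, (hw : G.Adj u w).ne, Or.inl hw⟩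
        have hM'W : M' ⊆ W := by
          rintro w ⟨hwu, hwv, hne, hor⟩
          rcases hor with hw | ⟨s, hs, h1, h2⟩
          · exact hnbW u huN ⟨hw, hwv⟩
          · rw [Set.mem_singleton_iff] at hs; subst hs
            exact hNW h2
        have hBsub : B ⊆ N \ {u} := by
          rintro w ⟨hwM', hwM⟩
          obtain ⟨-, hwv, hwu, hor⟩ := hwM'
          rcases hor with hw | ⟨s, hs, h1, h2⟩
          · exact absurd hw hwM
          · rw [Set.mem_singleton_iff] at hs; subst hs
            exact ⟨h2, Ne.symm hwu⟩
        have hBcard : B.ncard ≤ 1 := by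
          have h1 : (N \ {u}).ncard = N.ncard - 1 :=
            Set.ncard_diff_singleton_of_mem (huN : u ∈ N)
          have h2 := Set.ncard_le_ncard hBsub (Set.toFinite _)
          omega
        have hBM' : B ⊆ M' := fun w hw => hw.1
        have hMdecomp : M = insert v (M' \ B) := by
          ext w
          simp only [Set.mem_insert_iff, Set.mem_diff, hBdef, not_and, not_not]
          constructor
          · intro hw
            rcases eq_or_ne w v with rfl | hwv
            · exact Or.inl rfl
            · exact Or.inr ⟨hMsub ⟨hw, hwv⟩, fun _ => hw⟩
          · rintro (rfl | ⟨hw1, hw2⟩)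
            · exact hvM
            · exact hw2 hw1
        have hMcard : M.ncard = (M' \ B).ncard + 1 := by
          rw [hMdecomp, Set.ncard_insert_of_notMem (fun hmem => hvM' hmem.1)]
        have hM'Bcard : (M' \ B).ncard = M'.ncard - B.ncard := Set.ncard_diff hBM'
        have hBleM' : B.ncard ≤ M'.ncard := Set.ncard_le_ncard hBM' (Set.toFinite _)
        have hcntc : {w | G.Adj u w ∧ φ w = c} = {v} := by
          ext w
          simp only [Set.mem_setOf_eq, Set.mem_singleton_iff]
          constructor
          · rintro ⟨hw, hwc⟩
            by_contra hwv
            exact hcW w (hnbW u huN ⟨hw, hwv⟩) (by rw [← hφne w hwv]; exact hwc)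
          · rintro rfl; exact ⟨hadj_uv, hφv⟩
        have hcnt : ∀ c' : Fin 9, c' ≠ c → c' ∉ φ' '' B →
            {w | G.Adj u w ∧ φ w = c'} = {w | (G.reduce {v}).Adj u w ∧ φ' w = c'} := by
          intro c' hc'c hc'B
          ext w
          simp only [Set.mem_setOf_eq]
          constructor
          · rintro ⟨hw, hwc⟩
            have hwv : w ≠ v := by rintro rfl; exact hc'c (hφv.symm.trans hwc).symm
            exact ⟨hMsub ⟨hw, hwv⟩, by rw [← hφne w hwv]; exact hwc⟩
          · rintro ⟨hw, hwc⟩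
            have hwv : w ≠ v := fun e => hvM' (e ▸ hw)
            have hwM : w ∈ M := by
              by_contra hwM
              exact hc'B ⟨w, ⟨hw, hwM⟩, hwc⟩
            exact ⟨hwM, by rw [hφne w hwv]; exact hwc⟩
        set U : Set (Fin 9) := {c' | {w | G.Adj u w ∧ φ w = c'}.ncard = 1} with hUdef
        set U' : Set (Fin 9) :=
          {c' | {w | (G.reduce {v}).Adj u w ∧ φ' w = c'}.ncard = 1} with hU'def
        have hU'ne : ∀ c' ∈ U', c' ≠ c := by
          intro c' hc'U' he
          subst he
          obtain ⟨w, hw⟩ := Set.ncard_eq_one.mp hc'U'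
          have hwmem : w ∈ {x | (G.reduce {v}).Adj u x ∧ φ' x = c'} := by
            rw [hw]; exact rfl
          exact hcW w (hM'W hwmem.1) hwmem.2
        have hsub : insert c (U' \ φ' '' B) ⊆ U := by
          rintro c' hc'
          rcases Set.mem_insert_iff.mp hc' with rfl | ⟨hc'U', hc'B⟩
          · show {w | G.Adj u w ∧ φ w = c'}.ncard = 1
            rw [hcntc, Set.ncard_singleton]
          · show {w | G.Adj u w ∧ φ w = c'}.ncard = 1
            rw [hcnt c' (hU'ne c' hc'U') hc'B]
            exact hc'U'
        have hcnotin : c ∉ U' \ φ' '' B := fun hmem => hU'ne c hmem.1 rfl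
        have hUcard : (U' \ φ' '' B).ncard + 1 ≤ U.ncard := by
          rw [← Set.ncard_insert_of_notMem hcnotin]
          exact Set.ncard_le_ncard hsub (Set.toFinite _)
        have hdiff : U'.ncard ≤ (U' \ φ' '' B).ncard + (φ' '' B).ncard := by
          have hsub2 : U' ⊆ (U' \ φ' '' B) ∪ (φ' '' B) := by
            intro x hx
            by_cases hxB : x ∈ φ' '' B
            · exact Or.inr hxB
            · exact Or.inl ⟨hx, hxB⟩
          exact le_trans (Set.ncard_le_ncard hsub2 (Set.toFinite _))
            (Set.ncard_union_le _ _)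
        have hBimg : (φ' '' B).ncard ≤ B.ncard := Set.ncard_image_le (Set.toFinite _)
        have hmin : min 2 M'.ncard ≤ U'.ncard := hpcf' u
        omega
      · -- u not adjacent to v
        have hMeq : {w | (G.reduce {v}).Adj u w} = {w | G.Adj u w} := by
          ext w
          constructor
          · rintro ⟨-, -, -, hw | ⟨s, hs, h1, h2⟩⟩
            · exact hw
            · rw [Set.mem_singleton_iff] at hs; subst hs
              exact absurd h1.symm huN
          · intro hw
            have hwv : w ≠ v := fun e => huN (e ▸ (hw : G.Adj u w)).symm
            exact ⟨hu, hwv, (hw : G.Adj u w).ne, Or.inl hw⟩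
        have hcnt : ∀ c' : Fin 9,
            {w | G.Adj u w ∧ φ w = c'} = {w | (G.reduce {v}).Adj u w ∧ φ' w = c'} := by
          intro c'
          ext w
          simp only [Set.mem_setOf_eq]
          constructor
          · rintro ⟨hw, hwc⟩
            have hwv : w ≠ v := fun e => huN (e ▸ hw).symm
            exact ⟨⟨hu, hwv, hw.ne, Or.inl hw⟩, by rw [← hφne w hwv]; exact hwc⟩
          · rintro ⟨⟨-, hwv, -, hor⟩, hwc⟩
            have hw : G.Adj u w := by
              rcases hor with hw | ⟨s, hs, h1, h2⟩
              · exact hw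
              · rw [Set.mem_singleton_iff] at hs; subst hs
                exact absurd h1.symm huN
            have hwv' : w ≠ v := fun e => hwv e
            exact ⟨hw, by rw [hφne w hwv']; exact hwc⟩
        have hUeq : {c' : Fin 9 | {w | G.Adj u w ∧ φ w = c'}.ncard = 1} =
            {c' : Fin 9 | {w | (G.reduce {v}).Adj u w ∧ φ' w = c'}.ncard = 1} := by
          ext c'
          simp only [Set.mem_setOf_eq, hcnt]
        calc min 2 {w | G.Adj u w}.ncard
            = min 2 {w | (G.reduce {v}).Adj u w}.ncard := by rw [hMeq]
          _ ≤ {c' : Fin 9 | {w | (G.reduce {v}).Adj u w ∧ φ' w = c'}.ncard = 1}.ncard :=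
              hpcf' u
          _ = _ := by rw [← hUeq]
end

section
/- Let G be a simple graph with maximum degree at most 4 containing pairwise adjacent vertices x, y, z, where x has degree exactly 3 with third neighbor x₁ ∉ {y, z}, and x₁ has degree exactly 4. Set S = {x, y, z}. If the S-reduced graph G*S admits a 2-PCF 9-coloring, then G admits a 2-PCF 9-coloring. (Together with the previous case this shows a vertex-minimum counterexample has no 3-cycle containing a 3-vertex.) -/
namespace PCFAux

variable {α : Type*} [DecidableEq α]

/-- colors appearing exactly once in `m` -/
def uset (m : Multiset α) : Finset α := m.toFinset.filter fun c => m.count c = 1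

/-- number of colors appearing exactly once -/
def ucnt (m : Multiset α) : ℕ := (uset m).card

lemma mem_uset {m : Multiset α} {c : α} : c ∈ uset m ↔ m.count c = 1 := by
  constructor
  · intro h; exact (Finset.mem_filter.1 h).2
  · intro h
    exact Finset.mem_filter.2 ⟨Multiset.mem_toFinset.2 (Multiset.count_pos.1 (by omega)), h⟩

lemma ucnt_zero : ucnt (0 : Multiset α) = 0 := by
  simp [ucnt, uset]

lemma uset_cons_of_not_mem {m : Multiset α} {x : α} (hx : x ∉ m) :
    uset (x ::ₘ m) = insert x (uset m) := by
  ext c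
  by_cases hc : c = x
  · subst hc
    simp [mem_uset, Multiset.count_cons_self, Multiset.count_eq_zero_of_notMem hx]
  · simp [mem_uset, Multiset.count_cons_of_ne hc, Finset.mem_insert, hc]

lemma ucnt_cons_of_not_mem {m : Multiset α} {x : α} (hx : x ∉ m) :
    ucnt (x ::ₘ m) = ucnt m + 1 := by
  rw [ucnt, uset_cons_of_not_mem hx, Finset.card_insert_of_notMem]
  · rfl
  · intro hmem
    exact hx (Multiset.count_pos.1 (by rw [mem_uset.1 hmem]; omega))
    
lemma ucnt_le_cons (m : Multiset α) (x : α) : ucnt m ≤ ucnt (x ::ₘ m) + 1 := by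
  have hsub : uset m ⊆ insert x (uset (x ::ₘ m)) := by
    intro c hc
    by_cases hcx : c = x
    · exact Finset.mem_insert.2 (Or.inl hcx)
    · refine Finset.mem_insert.2 (Or.inr (mem_uset.2 ?_))
      rw [Multiset.count_cons_of_ne hcx]
      exact mem_uset.1 hc
  calc ucnt m ≤ (insert x (uset (x ::ₘ m))).card := Finset.card_le_card hsub
    _ ≤ ucnt (x ::ₘ m) + 1 := Finset.card_insert_le _ _

lemma ucnt_cons_le (m : Multiset α) (x : α) : ucnt (x ::ₘ m) ≤ ucnt m + 1 := by
  have hsub : uset (x ::ₘ m) ⊆ insert x (uset m) := by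
    intro c hc
    by_cases hcx : c = x
    · exact Finset.mem_insert.2 (Or.inl hcx)
    · refine Finset.mem_insert.2 (Or.inr (mem_uset.2 ?_))
      have := mem_uset.1 hc
      rwa [Multiset.count_cons_of_ne hcx] at this
  calc ucnt (x ::ₘ m) ≤ (insert x (uset m)).card := Finset.card_le_card hsub
    _ ≤ ucnt m + 1 := Finset.card_insert_le _ _

lemma ucnt_le_cons_of_two_le {m : Multiset α} {x : α} (hx : 2 ≤ m.count x) :
    ucnt m ≤ ucnt (x ::ₘ m) := by
  refine Finset.card_le_card ?_
  intro c hc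
  have hc1 := mem_uset.1 hc
  have hcx : c ≠ x := by intro h; subst h; omega
  exact mem_uset.2 (by rw [Multiset.count_cons_of_ne hcx]; exact hc1)

lemma ucnt_of_nodup {m : Multiset α} (h : m.Nodup) : ucnt m = Multiset.card m := by
  have : uset m = m.toFinset := by
    ext c
    simp only [mem_uset, Multiset.mem_toFinset]
    constructor
    · intro h1; exact Multiset.count_pos.1 (by omega)
    · intro h1
      have h2 := Multiset.count_pos.2 h1
      have h3 := (Multiset.nodup_iff_count_le_one.1 h) c
      omega
  rw [ucnt, this, Multiset.toFinset_card_of_nodup h]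

/-- the "big" colors: appearing at least twice -/
def bigset (m : Multiset α) : Finset α := m.toFinset.filter fun c => 2 ≤ m.count c

lemma sum_split (m : Multiset α) :
    Multiset.card m = ucnt m + ∑ c ∈ bigset m, m.count c := by
  classical
  have hdisj : Disjoint (uset m) (bigset m) := by
    rw [Finset.disjoint_left]
    intro c hc hc2
    have := mem_uset.1 hc
    have := (Finset.mem_filter.1 hc2).2
    omega
  have hunion : uset m ∪ bigset m = m.toFinset := by
    ext c
    simp only [Finset.mem_union, mem_uset, bigset, Finset.mem_filter, Multiset.mem_toFinset]
    constructor
    · rintro (h1 | h1)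
      · exact Multiset.count_pos.1 (by omega)
      · exact h1.1
    · intro h1
      have := Multiset.count_pos.2 h1
      rcases Nat.lt_or_ge (m.count c) 2 with h2 | h2
      · left; omega
      · right; exact ⟨h1, h2⟩
  have hsum := Multiset.toFinset_sum_count_eq m
  rw [← hunion, Finset.sum_union hdisj] at hsum
  have h1 : ∑ c ∈ uset m, m.count c = ucnt m := by
    rw [ucnt, Finset.card_eq_sum_ones]
    exact Finset.sum_congr rfl fun c hc => mem_uset.1 hc
  omega

lemma two_mul_bigcard_le (m : Multiset α) :
    ucnt m + 2 * (bigset m).card ≤ Multiset.card m := by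
  have h := sum_split m
  have h2 : 2 * (bigset m).card ≤ ∑ c ∈ bigset m, m.count c := by
    calc 2 * (bigset m).card = ∑ _c ∈ bigset m, 2 := by
          rw [Finset.sum_const, smul_eq_mul, mul_comm]
      _ ≤ ∑ c ∈ bigset m, m.count c :=
          Finset.sum_le_sum fun c hc => (Finset.mem_filter.1 hc).2
  omega


section Forb
variable [Fintype α]

/-- colors that, when added as the color of the unique special neighbor,
ruin the PCF condition -/
def Forb (m : Multiset α) : Finset α :=
  Finset.univ.filter fun β => ucnt (β ::ₘ m) < min 2 (Multiset.card m + 1)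

lemma not_mem_Forb {m : Multiset α} {β : α} :
    β ∉ Forb m ↔ min 2 (Multiset.card m + 1) ≤ ucnt (β ::ₘ m) := by
  rw [Forb, Finset.mem_filter, not_and, not_lt]
  constructor
  · intro h; exact h (Finset.mem_univ β)
  · intro h _; exact h

omit [Fintype α] in
lemma ucnt_le_card (m : Multiset α) : ucnt m ≤ Multiset.card m :=
  le_trans (Finset.card_le_card (Finset.filter_subset _ _)) (Multiset.toFinset_card_le m)

lemma Forb_card_le {m : Multiset α} (h3 : Multiset.card m ≤ 3)
    (h1 : m = 0 ∨ 1 ≤ ucnt m) : (Forb m).card ≤ 2 := by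
  rcases h1 with rfl | h1
  · have h : Forb (0 : Multiset α) = ∅ := by
      rw [Finset.eq_empty_iff_forall_notMem]
      intro β hβ
      have := (Finset.mem_filter.1 hβ).2
      rw [ucnt_cons_of_not_mem (Multiset.notMem_zero β), ucnt_zero] at this
      simp at this
    simp [h]
  · have hcard : 1 ≤ Multiset.card m := le_trans h1 (ucnt_le_card m)
    have hmin : min 2 (Multiset.card m + 1) = 2 := by omega
    have hnotbig : ∀ β, 2 ≤ ucnt m → β ∈ bigset m → β ∉ Forb m := by
      intro β h2 hb
      rw [not_mem_Forb, hmin]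
      exact le_trans h2 (ucnt_le_cons_of_two_le (Finset.mem_filter.1 hb).2)
    have hsub : Forb m ⊆ uset m ∪ bigset m := by
      intro β hβ
      have hlt : ucnt (β ::ₘ m) < 2 := by
        have := (Finset.mem_filter.1 hβ).2; rwa [hmin] at this
      by_cases hβm : β ∈ m
      · have := Multiset.count_pos.2 hβm
        rcases Nat.lt_or_ge (m.count β) 2 with h2 | h2
        · exact Finset.mem_union_left _ (mem_uset.2 (by omega))
        · exact Finset.mem_union_right _ (Finset.mem_filter.2 ⟨Multiset.mem_toFinset.2 hβm, h2⟩)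
      · exfalso
        rw [ucnt_cons_of_not_mem hβm] at hlt
        omega
    rcases Nat.lt_or_ge (ucnt m) 2 with h2 | h2
    · have hbig : (bigset m).card ≤ 1 := by have := two_mul_bigcard_le m; omega
      calc (Forb m).card ≤ (uset m ∪ bigset m).card := Finset.card_le_card hsub
        _ ≤ (uset m).card + (bigset m).card := Finset.card_union_le _ _
        _ ≤ 2 := by have : (uset m).card = ucnt m := rfl; omega
    · rcases Nat.lt_or_ge (ucnt m) 3 with h3' | h3'
      · have hFu : Forb m ⊆ uset m := by
          intro β hβ
          rcases Finset.mem_union.1 (hsub hβ) with h | h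
          · exact h
          · exact absurd hβ (hnotbig β h2 h)
        calc (Forb m).card ≤ (uset m).card := Finset.card_le_card hFu
          _ ≤ 2 := by have : (uset m).card = ucnt m := rfl; omega
      · have hF : Forb m ⊆ ∅ := by
          intro β hβ
          exfalso
          have hlt : ucnt (β ::ₘ m) < 2 := by
            have := (Finset.mem_filter.1 hβ).2; rwa [hmin] at this
          rcases Finset.mem_union.1 (hsub hβ) with h | h
          · have := ucnt_le_cons m β
            have : ucnt m ≤ ucnt (β ::ₘ m) + 1 := this
            omega
          · exact (hnotbig β h2 h) hβ
        rw [Finset.subset_empty] at hF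
        simp [hF]

lemma Forb_eq_empty {m : Multiset α} (h3 : Multiset.card m = 3) (h2 : 2 ≤ ucnt m) :
    Forb m = ∅ := by
  have hss := sum_split m
  have hbig := two_mul_bigcard_le m
  have h3' : 3 ≤ ucnt m := by
    rcases Nat.lt_or_ge (ucnt m) 3 with hlt | hge
    · exfalso
      have hb0 : (bigset m).card = 0 := by omega
      have hsum0 : ∑ c ∈ bigset m, m.count c = 0 := by
        rw [Finset.card_eq_zero.1 hb0, Finset.sum_empty]
      omega
    · exact hge
  rw [Finset.eq_empty_iff_forall_notMem]
  intro β hβ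
  have hmin : min 2 (Multiset.card m + 1) = 2 := by omega
  have hlt : ucnt (β ::ₘ m) < 2 := by
    have := (Finset.mem_filter.1 hβ).2; rwa [hmin] at this
  by_cases hβm : β ∈ m
  · have hpos := Multiset.count_pos.2 hβm
    rcases Nat.lt_or_ge (m.count β) 2 with hc | hc
    · have h := ucnt_le_cons m β; omega
    · have h := ucnt_le_cons_of_two_le hc; omega
  · rw [ucnt_cons_of_not_mem hβm] at hlt; omega

end Forb


section Graph
variable {V : Type*} [Fintype V]

noncomputable def nbF (H : SimpleGraph V) (v : V) : Finset V :=
  (Set.toFinite {u | H.Adj v u}).toFinset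

lemma mem_nbF {H : SimpleGraph V} {v u : V} : u ∈ nbF H v ↔ H.Adj v u :=
  Set.Finite.mem_toFinset _

noncomputable def mnb (H : SimpleGraph V) (f : V → α) (v : V) : Multiset α :=
  (nbF H v).val.map f

lemma card_mnb (H : SimpleGraph V) (f : V → α) (v : V) :
    Multiset.card (mnb H f v) = {u | H.Adj v u}.ncard := by
  rw [mnb, Multiset.card_map, Set.ncard_eq_toFinset_card _ (Set.toFinite _)]
  rfl

lemma count_mnb (H : SimpleGraph V) (f : V → α) (v : V) (c : α) :
    (mnb H f v).count c = {u | H.Adj v u ∧ f u = c}.ncard := by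
  classical
  rw [Set.ncard_eq_toFinset_card _ (Set.toFinite _)]
  have h1 : (Set.toFinite {u | H.Adj v u ∧ f u = c}).toFinset
      = (nbF H v).filter (fun u => f u = c) := by
    ext u
    simp [Set.Finite.mem_toFinset, mem_nbF, Finset.mem_filter]
  rw [h1, mnb, Multiset.count_map]
  show Multiset.card (Multiset.filter _ _) = Multiset.card (Multiset.filter _ _)
  congr 1
  exact Multiset.filter_congr (fun a _ => eq_comm)

lemma uc_mnb (H : SimpleGraph V) (f : V → α) (v : V) :
    {c : α | {u | H.Adj v u ∧ f u = c}.ncard = 1}.ncard = ucnt (mnb H f v) := by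
  have h1 : {c : α | {u | H.Adj v u ∧ f u = c}.ncard = 1} = ↑(uset (mnb H f v)) := by
    ext c
    simp only [Set.mem_setOf_eq, Finset.mem_coe, mem_uset, count_mnb]
  rw [h1, Set.ncard_coe_finset]
  rfl

lemma isPCF_iff (H : SimpleGraph V) (hh : ℕ) (f : V → α) :
    H.IsPCFColoring hh f ↔ ((∀ ⦃u w⦄, H.Adj u w → f u ≠ f w) ∧
      ∀ v, min hh (Multiset.card (mnb H f v)) ≤ ucnt (mnb H f v)) := by
  have hv : ∀ v : V, (min hh {u | H.Adj v u}.ncard ≤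
      {c : α | {u | H.Adj v u ∧ f u = c}.ncard = 1}.ncard
      ↔ min hh (Multiset.card (mnb H f v)) ≤ ucnt (mnb H f v)) := by
    intro v
    rw [card_mnb, uc_mnb]
  constructor
  · rintro ⟨h1, h2⟩
    exact ⟨h1, fun v => (hv v).mp (h2 v)⟩
  · rintro ⟨h1, h2⟩
    exact ⟨h1, fun v => (hv v).mpr (h2 v)⟩

end Graph

end PCFAux



namespace PCFAux

variable {α : Type*} [DecidableEq α]

lemma ucnt_cons_cons_ge_two {m : Multiset α} {p q : α} (hq : q ∉ m) (hp : p ∉ m)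
    (hpq : p ≠ q) : 2 ≤ ucnt (p ::ₘ q ::ₘ m) := by
  have h2 : p ∉ q ::ₘ m := by
    rw [Multiset.mem_cons]; push_neg; exact ⟨hpq, hp⟩
  rw [ucnt_cons_of_not_mem h2, ucnt_cons_of_not_mem hq]
  omega

lemma two_le_ucnt_of_counts {m : Multiset α} {c d : α} (hcd : c ≠ d)
    (hc : m.count c = 1) (hd : m.count d = 1) : 2 ≤ ucnt m := by
  have hsub : ({c, d} : Finset α) ⊆ uset m := by
    intro e he
    rcases Finset.mem_insert.1 he with rfl | he
    · exact mem_uset.2 hc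
    · rw [Finset.mem_singleton.1 he]; exact mem_uset.2 hd
  calc 2 = ({c, d} : Finset α).card := by
        rw [Finset.card_insert_of_notMem (by simp [hcd]), Finset.card_singleton]
    _ ≤ _ := Finset.card_le_card hsub

variable {V : Type*} [Fintype V] [DecidableEq V]

lemma count_mnb' (H : SimpleGraph V) (f : V → α) (v : V) (e : α) :
    (mnb H f v).count e = ((nbF H v).filter (fun u => f u = e)).card := by
  rw [mnb, Multiset.count_map, Finset.card_def, Finset.filter_val]
  congr 1
  exact Multiset.filter_congr (fun a _ => eq_comm)

/-- external part of the neighborhood -/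
noncomputable def ext (H : SimpleGraph V) (SF : Finset V) (v : V) : Finset V := nbF H v \ SF

/-- special part of the neighborhood -/
noncomputable def sn (H : SimpleGraph V) (SF : Finset V) (v : V) : Finset V := nbF H v ∩ SF

/-- colors of the external neighborhood -/
noncomputable def mext (H : SimpleGraph V) (SF : Finset V) (f : V → α) (v : V) :
    Multiset α := Multiset.map f (ext H SF v).val

lemma mem_ext {H : SimpleGraph V} {SF : Finset V} {v u : V} :
    u ∈ ext H SF v ↔ H.Adj v u ∧ u ∉ SF := by
  rw [ext, Finset.mem_sdiff, mem_nbF]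

lemma mem_sn {H : SimpleGraph V} {SF : Finset V} {v u : V} :
    u ∈ sn H SF v ↔ H.Adj v u ∧ u ∈ SF := by
  rw [sn, Finset.mem_inter, mem_nbF]

lemma card_ext_add_card_sn (H : SimpleGraph V) (SF : Finset V) (v : V) :
    (ext H SF v).card + (sn H SF v).card = (nbF H v).card :=
  Finset.card_sdiff_add_card_inter _ _

lemma card_mext (H : SimpleGraph V) (SF : Finset V) (f : V → α) (v : V) :
    Multiset.card (mext H SF f v) = (ext H SF v).card := Multiset.card_map _ _

lemma mem_mext {H : SimpleGraph V} {SF : Finset V} {f : V → α} {v : V} {c : α} :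
    c ∈ mext H SF f v ↔ ∃ u ∈ ext H SF v, f u = c := by
  rw [mext, Multiset.mem_map]
  constructor
  · rintro ⟨u, hu, rfl⟩; exact ⟨u, Finset.mem_val.mp hu, rfl⟩
  · rintro ⟨u, hu, rfl⟩; exact ⟨u, Finset.mem_val.mpr hu, rfl⟩

/-- colors a special vertex `s` must avoid for the sake of its external
neighbor `v` -/
noncomputable def bad [Fintype α] (H : SimpleGraph V) (SF : Finset V) (f : V → α) (v : V) :
    Finset α :=
  if (sn H SF v).card ≤ 1 then Forb (mext H SF f v) else (mext H SF f v).toFinset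

end PCFAux

open PCFAux in
private theorem aux_red {V : Type*} [Fintype V]
    (G : SimpleGraph V)
    (hΔ : ∀ u : V, {w | G.Adj u w}.ncard ≤ 4)
    (x y z x₁ : V)
    (hxy : G.Adj x y) (hyz : G.Adj y z) (hxz : G.Adj x z)
    (hdx : {w | G.Adj x w}.ncard = 3)
    (hxx₁ : G.Adj x x₁) (hx₁y : x₁ ≠ y) (hx₁z : x₁ ≠ z)
    (hdx₁ : {w | G.Adj x₁ w}.ncard = 4)
    (hwlog : ({w | G.Adj z w} \ {x, y, z}).ncard ≤ ({w | G.Adj y w} \ {x, y, z}).ncard)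
    (h : (G.reduce {x, y, z}).HasPCFColoring 2 9) :
    G.HasPCFColoring 2 9 := by
  classical
  obtain ⟨φ, hφ⟩ := h
  rw [isPCF_iff] at hφ
  obtain ⟨hφp, hφu⟩ := hφ
  have hxny : x ≠ y := G.ne_of_adj hxy
  have hxnz : x ≠ z := G.ne_of_adj hxz
  have hynz : y ≠ z := G.ne_of_adj hyz
  have hxnx₁ : x ≠ x₁ := G.ne_of_adj hxx₁
  set S : Set V := {x, y, z} with hS
  set SF : Finset V := {x, y, z} with hSF
  have hmemSF : ∀ v, v ∈ SF ↔ (v = x ∨ v = y ∨ v = z) := by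
    intro v; simp [hSF]
  have hmemS : ∀ v, v ∈ S ↔ v ∈ SF := by
    intro v; rw [hmemSF]; simp [hS]
  have hxSF : x ∈ SF := (hmemSF x).2 (Or.inl rfl)
  have hySF : y ∈ SF := (hmemSF y).2 (Or.inr (Or.inl rfl))
  have hzSF : z ∈ SF := (hmemSF z).2 (Or.inr (Or.inr rfl))
  have hx₁SF : x₁ ∉ SF := by
    rw [hmemSF]; push_neg; exact ⟨fun h' => hxnx₁ h'.symm, hx₁y, hx₁z⟩
  -- degrees
  have hnbc : ∀ v, (nbF G v).card = {w | G.Adj v w}.ncard := fun v =>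
    (Set.ncard_eq_toFinset_card _ (Set.toFinite _)).symm
  have hnb4 : ∀ v, (nbF G v).card ≤ 4 := fun v => by rw [hnbc]; exact hΔ v
  -- N(x) = {y, z, x₁}
  have hNx : nbF G x = {y, z, x₁} := by
    have hsub : ({y, z, x₁} : Finset V) ⊆ nbF G x := by
      intro u hu
      rcases (by simpa using hu : u = y ∨ u = z ∨ u = x₁) with rfl | rfl | rfl
      · exact mem_nbF.2 hxy
      · exact mem_nbF.2 hxz
      · exact mem_nbF.2 hxx₁
    have hc3 : ({y, z, x₁} : Finset V).card = 3 := by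
      rw [Finset.card_insert_of_notMem (by simp [hynz, Ne.symm hx₁y]),
        Finset.card_insert_of_notMem (by simp [Ne.symm hx₁z]), Finset.card_singleton]
    refine (Finset.eq_of_subset_of_card_le hsub ?_).symm
    rw [hnbc, hdx, hc3]
  have hExtx : PCFAux.ext G SF x = {x₁} := by
    ext u
    rw [mem_ext]
    constructor
    · rintro ⟨hadj, hu⟩
      have hmem := mem_nbF.2 hadj
      rw [hNx] at hmem
      rcases (by simpa using hmem : u = y ∨ u = z ∨ u = x₁) with rfl | rfl | rfl
      · exact absurd hySF hu
      · exact absurd hzSF hu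
      · simp
    · intro hu
      rcases Finset.mem_singleton.1 hu with rfl
      exact ⟨hxx₁, hx₁SF⟩
  have hcExtS : ∀ s ∈ SF, (PCFAux.ext G SF s).card ≤ 2 := by
    intro s hs
    rcases (hmemSF s).1 hs with hseq | hseq | hseq <;> rw [hseq]
    · rw [hExtx]; simp
    · have h2 : ({x, z} : Finset V) ⊆ sn G SF y := by
        intro u hu
        rcases (by simpa using hu : u = x ∨ u = z) with rfl | rfl
        · exact mem_sn.2 ⟨hxy.symm, hxSF⟩
        · exact mem_sn.2 ⟨hyz, hzSF⟩
      have h3 : 2 ≤ (sn G SF y).card := by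
        calc 2 = ({x, z} : Finset V).card := by
              rw [Finset.card_insert_of_notMem (by simp [hxnz]), Finset.card_singleton]
          _ ≤ _ := Finset.card_le_card h2
      have h4 := card_ext_add_card_sn G SF y
      have h5 := hnb4 y
      omega
    · have h2 : ({x, y} : Finset V) ⊆ sn G SF z := by
        intro u hu
        rcases (by simpa using hu : u = x ∨ u = y) with rfl | rfl
        · exact mem_sn.2 ⟨hxz.symm, hxSF⟩
        · exact mem_sn.2 ⟨hyz.symm, hySF⟩
      have h3 : 2 ≤ (sn G SF z).card := by
        calc 2 = ({x, y} : Finset V).card := by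
              rw [Finset.card_insert_of_notMem (by simp [hxny]), Finset.card_singleton]
          _ ≤ _ := Finset.card_le_card h2
      have h4 := card_ext_add_card_sn G SF z
      have h5 := hnb4 z
      omega
  -- reduce adjacency
  have hradj : ∀ u w : V, u ∉ SF → w ∉ SF → u ≠ w →
      (G.Adj u w ∨ ∃ s ∈ SF, G.Adj u s ∧ G.Adj s w) → (G.reduce S).Adj u w := by
    intro u w hu hw hne hor
    show u ∉ S ∧ w ∉ S ∧ u ≠ w ∧ (G.Adj u w ∨ ∃ s ∈ S, G.Adj u s ∧ G.Adj s w)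
    refine ⟨fun h' => hu ((hmemS u).1 h'), fun h' => hw ((hmemS w).1 h'), hne, ?_⟩
    rcases hor with h' | ⟨s, hs, h1, h2⟩
    · exact Or.inl h'
    · exact Or.inr ⟨s, (hmemS s).2 hs, h1, h2⟩
  have hφS : ∀ s ∈ SF, ∀ u ∈ PCFAux.ext G SF s, ∀ w ∈ PCFAux.ext G SF s,
      u ≠ w → φ u ≠ φ w := by
    intro s hs u hu w hw hne
    obtain ⟨hu1, hu2⟩ := mem_ext.1 hu
    obtain ⟨hw1, hw2⟩ := mem_ext.1 hw
    by_cases hadj : G.Adj u w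
    · exact hφp (hradj u w hu2 hw2 hne (Or.inl hadj))
    · exact hφp (hradj u w hu2 hw2 hne (Or.inr ⟨s, hs, hu1.symm, hw1⟩))
  -- reduced neighborhoods of external vertices with one special neighbor
  have hrednb : ∀ v s : V, v ∉ SF → sn G SF v = {s} →
      PCFAux.ext G SF v ⊆ nbF (G.reduce S) v ∧
      nbF (G.reduce S) v ⊆ PCFAux.ext G SF v ∪ (PCFAux.ext G SF s \ {v}) := by
    intro v s hv hSNv
    constructor
    · intro u hu
      obtain ⟨h1, h2⟩ := mem_ext.1 hu
      exact mem_nbF.2 (hradj v u hv h2 (G.ne_of_adj h1) (Or.inl h1))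
    · intro u hu
      obtain ⟨hu1, hu2, hu3, hor⟩ := (mem_nbF.1 hu :
          v ∉ S ∧ u ∉ S ∧ v ≠ u ∧ (G.Adj v u ∨ ∃ s ∈ S, G.Adj v s ∧ G.Adj s u))
      have hu2' : u ∉ SF := fun hc => hu2 ((hmemS u).2 hc)
      rcases hor with h' | ⟨s', hs', h1, h2⟩
      · exact Finset.mem_union_left _ (mem_ext.2 ⟨h', hu2'⟩)
      · have hs'SF : s' ∈ SF := (hmemS s').1 hs'
        have hmem : s' ∈ sn G SF v := mem_sn.2 ⟨h1, hs'SF⟩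
        rw [hSNv, Finset.mem_singleton] at hmem
        subst hmem
        refine Finset.mem_union_right _ (Finset.mem_sdiff.2
          ⟨mem_ext.2 ⟨h2, hu2'⟩, by simpa using (Ne.symm hu3)⟩)
  have hE1 : ∀ v s : V, v ∉ SF → s ∈ SF → sn G SF v = {s} →
      (mext G SF φ v = 0 ∨ 1 ≤ ucnt (mext G SF φ v)) := by
    intro v s hv hs hSNv
    by_cases hE0 : PCFAux.ext G SF v = ∅
    · left; rw [mext, hE0]; rfl
    · right
      have hsmem : s ∈ sn G SF v := by rw [hSNv]; simp
      have hvmem : v ∈ PCFAux.ext G SF s :=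
        mem_ext.2 ⟨(mem_sn.1 hsmem).1.symm, hv⟩
      have hD : ((nbF (G.reduce S) v) \ PCFAux.ext G SF v).card ≤ 1 := by
        have hsub : (nbF (G.reduce S) v) \ PCFAux.ext G SF v ⊆
            PCFAux.ext G SF s \ {v} := by
          intro u hu
          rcases Finset.mem_union.1 ((hrednb v s hv hSNv).2 (Finset.mem_sdiff.1 hu).1)
            with h' | h'
          · exact absurd h' (Finset.mem_sdiff.1 hu).2
          · exact h'
        calc _ ≤ (PCFAux.ext G SF s \ {v}).card := Finset.card_le_card hsub
          _ = (PCFAux.ext G SF s).card - 1 := by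
              rw [Finset.card_sdiff_of_subset (by simpa using hvmem)]; simp
          _ ≤ 1 := by have := hcExtS s hs; omega
      have hExtsub := (hrednb v s hv hSNv).1
      have hcard1 : 1 ≤ Multiset.card (mext G SF φ v) := by
        rw [card_mext]
        exact Finset.card_pos.2 (Finset.nonempty_iff_ne_empty.2 hE0)
      have hred := hφu v
      rcases Nat.le_one_iff_eq_zero_or_eq_one.1 hD with h0 | h1
      · have heq : nbF (G.reduce S) v = PCFAux.ext G SF v := by
          apply Finset.Subset.antisymm
          · intro u hu
            by_contra hcon
            have hmem : u ∈ nbF (G.reduce S) v \ PCFAux.ext G SF v :=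
              Finset.mem_sdiff.2 ⟨hu, hcon⟩
            rw [Finset.card_eq_zero.1 h0] at hmem
            simp at hmem
          · exact hExtsub
        rw [mnb, heq] at hred
        have hred' : min 2 (Multiset.card (mext G SF φ v)) ≤ ucnt (mext G SF φ v) := hred
        have hm1 : (1:ℕ) ≤ min 2 (Multiset.card (mext G SF φ v)) :=
          le_min (by norm_num) hcard1
        omega
      · obtain ⟨t, ht⟩ := Finset.card_eq_one.1 h1
        have htmem : t ∈ nbF (G.reduce S) v \ PCFAux.ext G SF v := by rw [ht]; simp
        have hins : nbF (G.reduce S) v = insert t (PCFAux.ext G SF v) := by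
          ext u
          constructor
          · intro hu
            by_cases hcon : u ∈ PCFAux.ext G SF v
            · exact Finset.mem_insert.2 (Or.inr hcon)
            · have hmem : u ∈ nbF (G.reduce S) v \ PCFAux.ext G SF v :=
                Finset.mem_sdiff.2 ⟨hu, hcon⟩
              rw [ht, Finset.mem_singleton] at hmem
              exact Finset.mem_insert.2 (Or.inl hmem)
          · intro hu
            rcases Finset.mem_insert.1 hu with rfl | hu'
            · exact (Finset.mem_sdiff.1 htmem).1
            · exact hExtsub hu'
        have hmeq : mnb (G.reduce S) φ v = φ t ::ₘ mext G SF φ v := by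
          rw [mnb, hins, Finset.insert_val_of_notMem (Finset.mem_sdiff.1 htmem).2,
            Multiset.map_cons]
          rfl
        rw [hmeq] at hred
        have hc2 : Multiset.card (φ t ::ₘ mext G SF φ v) =
            Multiset.card (mext G SF φ v) + 1 := by simp
        rw [hc2] at hred
        have hmin2 : min 2 (Multiset.card (mext G SF φ v) + 1) = 2 := by omega
        rw [hmin2] at hred
        have := ucnt_cons_le (mext G SF φ v) (φ t)
        omega
  -- the special fact about x₁
  have hSNx₁x : x ∈ sn G SF x₁ := mem_sn.2 ⟨hxx₁.symm, hxSF⟩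
  have hEx₁Forb : sn G SF x₁ = {x} → Forb (mext G SF φ x₁) = ∅ := by
    intro hSN1
    have hsncard : (sn G SF x₁).card = 1 := by rw [hSN1]; simp
    have hcard3 : Multiset.card (mext G SF φ x₁) = 3 := by
      rw [card_mext]
      have h1 := card_ext_add_card_sn G SF x₁
      have hnc : (nbF G x₁).card = 4 := by rw [hnbc]; exact hdx₁
      omega
    refine Forb_eq_empty hcard3 ?_
    have h1 := hrednb x₁ x hx₁SF hSN1
    have hnbeq : nbF (G.reduce S) x₁ = PCFAux.ext G SF x₁ := by
      apply Finset.Subset.antisymm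
      · intro u hu
        rcases Finset.mem_union.1 (h1.2 hu) with h' | h'
        · exact h'
        · exfalso
          obtain ⟨hm1, hm2⟩ := Finset.mem_sdiff.1 h'
          rw [hExtx, Finset.mem_singleton] at hm1
          subst hm1
          simp at hm2
      · exact h1.1
    have hred := hφu x₁
    rw [mnb, hnbeq] at hred
    have hred' : min 2 (Multiset.card (mext G SF φ x₁)) ≤ ucnt (mext G SF φ x₁) := hred
    rw [hcard3] at hred'
    simpa using hred'
  -- per-external-vertex bad sets are small
  have hBadcard : ∀ v, v ∉ SF → (sn G SF v).Nonempty → (bad G SF φ v).card ≤ 2 := by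
    rintro v hv ⟨s0, hs0⟩
    rw [bad]
    by_cases hk : (sn G SF v).card ≤ 1
    · rw [if_pos hk]
      have hc1 : (sn G SF v).card = 1 :=
        le_antisymm hk (Finset.card_pos.2 ⟨s0, hs0⟩)
      obtain ⟨s, hs⟩ := Finset.card_eq_one.1 hc1
      have hsSF : s ∈ SF := by
        have hmem : s ∈ sn G SF v := by rw [hs]; simp
        exact (mem_sn.1 hmem).2
      apply Forb_card_le
      · rw [card_mext]
        have h1 := card_ext_add_card_sn G SF v
        have h2 := hnb4 v
        omega
      · rcases hE1 v s hv hsSF hs with h' | h'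
        · exact Or.inl h'
        · exact Or.inr h'
    · rw [if_neg hk]
      calc (mext G SF φ v).toFinset.card ≤ Multiset.card (mext G SF φ v) :=
            Multiset.toFinset_card_le _
        _ ≤ 2 := by
            rw [card_mext]
            have h1 := card_ext_add_card_sn G SF v
            have h2 := hnb4 v
            omega
  -- greedy choice machinery
  have hpick : ∀ F : Finset (Fin 9), F.card ≤ 8 → ∃ e, e ∉ F := by
    intro F hF
    have h9 : Fintype.card (Fin 9) = 9 := by simp
    have hpos : 0 < Fᶜ.card := by rw [Finset.card_compl]; omega
    obtain ⟨e, he⟩ := Finset.card_pos.1 hpos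
    exact ⟨e, Finset.mem_compl.1 he⟩
  have hstep : ∀ (P Q : Finset (Fin 9)) (p q : ℕ), P.card ≤ p → Q.card ≤ q →
      (P ∪ Q).card ≤ p + q := fun P Q p q hP hQ =>
    le_trans (Finset.card_union_le _ _) (by omega)
  have hsing : ∀ e : Fin 9, ({e} : Finset (Fin 9)).card ≤ 1 := fun e => by simp
  have hpair : ∀ e f : Fin 9, ({e, f} : Finset (Fin 9)).card ≤ 2 := fun e f =>
    le_trans (Finset.card_insert_le _ _) (by simp)
  have hcimage : ∀ s ∈ SF, ((PCFAux.ext G SF s).image φ).card ≤ 2 := fun s hs =>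
    le_trans (Finset.card_image_le) (hcExtS s hs)
  have hbiU : ∀ s ∈ SF, ((PCFAux.ext G SF s).biUnion (bad G SF φ)).card ≤
      (PCFAux.ext G SF s).card * 2 := by
    intro s hs
    refine le_trans Finset.card_biUnion_le (le_trans (Finset.sum_le_sum
      (fun v hv => hBadcard v (mem_ext.1 hv).2
        ⟨s, mem_sn.2 ⟨(mem_ext.1 hv).1.symm, hs⟩⟩)) ?_)
    rw [Finset.sum_const, smul_eq_mul]
  have hbiUy : ((PCFAux.ext G SF y).biUnion (bad G SF φ)).card ≤ 4 :=
    le_trans (hbiU y hySF) (by have := hcExtS y hySF; omega)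
  have hbiUz : ((PCFAux.ext G SF z).biUnion (bad G SF φ)).card ≤ 4 :=
    le_trans (hbiU z hzSF) (by have := hcExtS z hzSF; omega)
  have hset : ∀ s : V, {w | G.Adj s w} \ S = ↑(PCFAux.ext G SF s) := by
    intro s
    ext u
    simp only [Set.mem_diff, Set.mem_setOf_eq, Finset.mem_coe, mem_ext]
    rw [hmemS u]
  have hwlog' : (PCFAux.ext G SF z).card ≤ (PCFAux.ext G SF y).card := by
    have h1 := hwlog
    rw [hset y, hset z, Set.ncard_coe_finset, Set.ncard_coe_finset] at h1
    exact h1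
  -- choose b
  set Fb : Finset (Fin 9) := ((PCFAux.ext G SF y).image φ) ∪ {φ x₁} ∪
    ((PCFAux.ext G SF y).biUnion (bad G SF φ)) ∪
    (if (PCFAux.ext G SF z).card ≤ 1 then (PCFAux.ext G SF z).image φ else ∅) with hFb
  obtain ⟨b, hb⟩ : ∃ e, e ∉ Fb := by
    apply hpick
    rw [hFb]
    have hif : (if (PCFAux.ext G SF z).card ≤ 1 then (PCFAux.ext G SF z).image φ
        else ∅).card ≤ 1 := by
      by_cases hle : (PCFAux.ext G SF z).card ≤ 1
      · rw [if_pos hle]; exact le_trans Finset.card_image_le hle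
      · rw [if_neg hle]; simp
    exact le_trans (hstep _ _ 7 1 (hstep _ _ 3 4 (hstep _ _ 2 1 (hcimage y hySF)
      (hsing _)) hbiUy) hif) (by norm_num)
  -- choose c
  set Fc : Finset (Fin 9) := ((PCFAux.ext G SF z).image φ) ∪ {φ x₁} ∪
    ((PCFAux.ext G SF z).biUnion (bad G SF φ)) ∪ {b} ∪
    (if (PCFAux.ext G SF y).card ≤ 1 then (PCFAux.ext G SF y).image φ else ∅) with hFc
  obtain ⟨c, hc⟩ : ∃ e, e ∉ Fc := by
    apply hpick
    rw [hFc]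
    by_cases hy1 : (PCFAux.ext G SF y).card ≤ 1
    · have hz1 : (PCFAux.ext G SF z).card ≤ 1 := le_trans hwlog' hy1
      have hbz : ((PCFAux.ext G SF z).biUnion (bad G SF φ)).card ≤ 2 :=
        le_trans (hbiU z hzSF) (by omega)
      have hifc : (if (PCFAux.ext G SF y).card ≤ 1 then (PCFAux.ext G SF y).image φ
          else ∅).card ≤ 1 := by
        rw [if_pos hy1]; exact le_trans Finset.card_image_le hy1
      exact le_trans (hstep _ _ 5 1 (hstep _ _ 4 1 (hstep _ _ 2 2 (hstep _ _ 1 1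
        (le_trans Finset.card_image_le hz1) (hsing _)) hbz) (hsing _)) hifc) (by norm_num)
    · have hifc : (if (PCFAux.ext G SF y).card ≤ 1 then (PCFAux.ext G SF y).image φ
          else ∅).card ≤ 0 := by rw [if_neg hy1]; simp
      exact le_trans (hstep _ _ 8 0 (hstep _ _ 7 1 (hstep _ _ 3 4 (hstep _ _ 2 1
        (hcimage z hzSF) (hsing _)) hbiUz) (hsing _)) hifc) (by norm_num)
  -- choose a
  set Fa : Finset (Fin 9) := {φ x₁} ∪ ((PCFAux.ext G SF y).image φ) ∪
    ((PCFAux.ext G SF z).image φ) ∪ bad G SF φ x₁ ∪ {b, c} with hFa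
  obtain ⟨a, ha⟩ : ∃ e, e ∉ Fa := by
    apply hpick
    by_cases hk1 : (sn G SF x₁).card ≤ 1
    · have hSN1 : sn G SF x₁ = {x} := by
        have hc1 : (sn G SF x₁).card = 1 :=
          le_antisymm hk1 (Finset.card_pos.2 ⟨x, hSNx₁x⟩)
        obtain ⟨s, hs⟩ := Finset.card_eq_one.1 hc1
        have hxs : x ∈ ({s} : Finset V) := hs ▸ hSNx₁x
        rw [Finset.mem_singleton] at hxs
        rw [hs, hxs]
      have hbad0 : bad G SF φ x₁ = ∅ := by
        rw [bad, if_pos hk1, hEx₁Forb hSN1]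
      rw [hFa, hbad0]
      exact le_trans (hstep _ _ 5 2 (hstep _ _ 5 0 (hstep _ _ 3 2 (hstep _ _ 1 2
        (hsing _) (hcimage y hySF)) (hcimage z hzSF)) (by simp)) (hpair _ _))
        (by norm_num)
    · have hlt : 1 < (sn G SF x₁).card := by omega
      obtain ⟨s, hsmem, hsx⟩ := Finset.exists_mem_ne hlt x
      have hsSF : s ∈ SF := (mem_sn.1 hsmem).2
      have hφx₁mem : φ x₁ ∈ ((PCFAux.ext G SF y).image φ) ∪
          ((PCFAux.ext G SF z).image φ) := by
        rcases (hmemSF s).1 hsSF with hseq | hseq | hseq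
        · exact absurd hseq hsx
        · exact Finset.mem_union_left _ (Finset.mem_image.2
            ⟨x₁, mem_ext.2 ⟨(hseq ▸ (mem_sn.1 hsmem).1).symm, hx₁SF⟩, rfl⟩)
        · exact Finset.mem_union_right _ (Finset.mem_image.2
            ⟨x₁, mem_ext.2 ⟨(hseq ▸ (mem_sn.1 hsmem).1).symm, hx₁SF⟩, rfl⟩)
      have hbad2 : (bad G SF φ x₁).card ≤ 2 := hBadcard x₁ hx₁SF ⟨x, hSNx₁x⟩
      have hsubFa : Fa ⊆ ((PCFAux.ext G SF y).image φ) ∪ ((PCFAux.ext G SF z).image φ) ∪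
          bad G SF φ x₁ ∪ {b, c} := by
        rw [hFa]
        intro e he
        simp only [Finset.mem_union] at he ⊢
        rcases he with ((((he | he) | he) | he) | he)
        · rw [Finset.mem_singleton] at he
          subst he
          rcases Finset.mem_union.1 hφx₁mem with h' | h'
          · exact Or.inl (Or.inl (Or.inl h'))
          · exact Or.inl (Or.inl (Or.inr h'))
        · exact Or.inl (Or.inl (Or.inl he))
        · exact Or.inl (Or.inl (Or.inr he))
        · exact Or.inl (Or.inr he)
        · exact Or.inr he
      refine le_trans (Finset.card_le_card hsubFa) ?_
      exact le_trans (hstep _ _ 6 2 (hstep _ _ 4 2 (hstep _ _ 2 2 (hcimage y hySF)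
        (hcimage z hzSF)) hbad2) (hpair _ _)) (by norm_num)
  -- unpack the three non-membership facts
  have hbNy : b ∉ (PCFAux.ext G SF y).image φ := fun hcon => hb (by
    rw [hFb]; exact Finset.mem_union_left _ (Finset.mem_union_left _
      (Finset.mem_union_left _ hcon)))
  have hbφx₁ : b ≠ φ x₁ := fun hcon => hb (by
    rw [hFb]; exact Finset.mem_union_left _ (Finset.mem_union_left _
      (Finset.mem_union_right _ (by simp [hcon]))))
  have hbBad : ∀ v ∈ PCFAux.ext G SF y, b ∉ bad G SF φ v := fun v hv hcon => hb (by
    rw [hFb]; exact Finset.mem_union_left _ (Finset.mem_union_right _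
      (Finset.mem_biUnion.2 ⟨v, hv, hcon⟩)))
  have hbNz1 : (PCFAux.ext G SF z).card ≤ 1 → b ∉ (PCFAux.ext G SF z).image φ :=
    fun h1 hcon => hb (by
      rw [hFb]; exact Finset.mem_union_right _ (by rw [if_pos h1]; exact hcon))
  have hcNz : c ∉ (PCFAux.ext G SF z).image φ := fun hcon => hc (by
    rw [hFc]; exact Finset.mem_union_left _ (Finset.mem_union_left _
      (Finset.mem_union_left _ (Finset.mem_union_left _ hcon))))
  have hcφx₁ : c ≠ φ x₁ := fun hcon => hc (by
    rw [hFc]; exact Finset.mem_union_left _ (Finset.mem_union_left _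
      (Finset.mem_union_left _ (Finset.mem_union_right _ (by simp [hcon])))))
  have hcBad : ∀ v ∈ PCFAux.ext G SF z, c ∉ bad G SF φ v := fun v hv hcon => hc (by
    rw [hFc]; exact Finset.mem_union_left _ (Finset.mem_union_left _
      (Finset.mem_union_right _ (Finset.mem_biUnion.2 ⟨v, hv, hcon⟩))))
  have hcb : c ≠ b := fun hcon => hc (by
    rw [hFc]; exact Finset.mem_union_left _ (Finset.mem_union_right _ (by simp [hcon])))
  have hcNy1 : (PCFAux.ext G SF y).card ≤ 1 → c ∉ (PCFAux.ext G SF y).image φ :=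
    fun h1 hcon => hc (by
      rw [hFc]; exact Finset.mem_union_right _ (by rw [if_pos h1]; exact hcon))
  have haφx₁ : a ≠ φ x₁ := fun hcon => ha (by
    rw [hFa]; exact Finset.mem_union_left _ (Finset.mem_union_left _
      (Finset.mem_union_left _ (Finset.mem_union_left _ (by simp [hcon])))))
  have haNy : a ∉ (PCFAux.ext G SF y).image φ := fun hcon => ha (by
    rw [hFa]; exact Finset.mem_union_left _ (Finset.mem_union_left _
      (Finset.mem_union_left _ (Finset.mem_union_right _ hcon))))
  have haNz : a ∉ (PCFAux.ext G SF z).image φ := fun hcon => ha (by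
    rw [hFa]; exact Finset.mem_union_left _ (Finset.mem_union_left _
      (Finset.mem_union_right _ hcon)))
  have haBadx₁ : a ∉ bad G SF φ x₁ := fun hcon => ha (by
    rw [hFa]; exact Finset.mem_union_left _ (Finset.mem_union_right _ hcon))
  have hab : a ≠ b := fun hcon => ha (by
    rw [hFa]; exact Finset.mem_union_right _ (by simp [hcon]))
  have hac : a ≠ c := fun hcon => ha (by
    rw [hFa]; exact Finset.mem_union_right _ (by simp [hcon]))
  -- the new coloring
  set ψ : V → Fin 9 := fun v => if v = x then a else if v = y then b else
    if v = z then c else φ v with hψdef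
  have hψx : ψ x = a := by rw [hψdef]; simp
  have hψy : ψ y = b := by rw [hψdef]; simp [Ne.symm hxny]
  have hψz : ψ z = c := by rw [hψdef]; simp [Ne.symm hxnz, Ne.symm hynz]
  have hψo : ∀ u, u ∉ SF → ψ u = φ u := by
    intro u hu
    rw [hmemSF] at hu
    push_neg at hu
    rw [hψdef]
    simp [hu.1, hu.2.1, hu.2.2]
  have hψSFne : ∀ p, p ∈ SF → ∀ q, q ∈ SF → p ≠ q → ψ p ≠ ψ q := by
    intro p hp q hq hne
    rcases (hmemSF p).1 hp with heq | heq | heq <;>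
      rcases (hmemSF q).1 hq with heq2 | heq2 | heq2 <;>
      rw [heq, heq2] <;> rw [heq, heq2] at hne <;>
      first
        | exact absurd rfl hne
        | (rw [hψx, hψy]; exact hab)
        | (rw [hψx, hψz]; exact hac)
        | (rw [hψy, hψx]; exact Ne.symm hab)
        | (rw [hψy, hψz]; exact Ne.symm hcb)
        | (rw [hψz, hψx]; exact Ne.symm hac)
        | (rw [hψz, hψy]; exact hcb)
  -- trichotomies for the special vertices
  have hx_tri : ∀ w, G.Adj x w → w = y ∨ w = z ∨ w = x₁ := by
    intro w hw
    have hmem := mem_nbF.2 hw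
    rw [hNx] at hmem
    simpa using hmem
  have hy_tri : ∀ w, G.Adj y w → w = x ∨ w = z ∨ w ∈ PCFAux.ext G SF y := by
    intro w hw
    by_cases hwSF : w ∈ SF
    · rcases (hmemSF w).1 hwSF with heq | heq | heq
      · exact Or.inl heq
      · rw [heq] at hw; exact absurd hw G.irrefl
      · exact Or.inr (Or.inl heq)
    · exact Or.inr (Or.inr (mem_ext.2 ⟨hw, hwSF⟩))
  have hz_tri : ∀ w, G.Adj z w → w = x ∨ w = y ∨ w ∈ PCFAux.ext G SF z := by
    intro w hw
    by_cases hwSF : w ∈ SF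
    · rcases (hmemSF w).1 hwSF with heq | heq | heq
      · exact Or.inl heq
      · exact Or.inr (Or.inl heq)
      · rw [heq] at hw; exact absurd hw G.irrefl
    · exact Or.inr (Or.inr (mem_ext.2 ⟨hw, hwSF⟩))
  have hvx₁ : ∀ v, v ∉ SF → G.Adj v x → v = x₁ := by
    intro v hv hadj
    have hmem : v ∈ PCFAux.ext G SF x := mem_ext.2 ⟨hadj.symm, hv⟩
    rw [hExtx] at hmem
    exact Finset.mem_singleton.1 hmem
  -- counting helper
  have hcnt1 : ∀ v p : V, G.Adj v p → (∀ u, G.Adj v u → ψ u = ψ p → u = p) →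
      (mnb G ψ v).count (ψ p) = 1 := by
    intro v p hadj huniq
    rw [count_mnb']
    have hfe : (nbF G v).filter (fun u => ψ u = ψ p) = {p} := by
      ext u
      simp only [Finset.mem_filter, mem_nbF, Finset.mem_singleton]
      constructor
      · rintro ⟨h1, h2⟩; exact huniq u h1 h2
      · rintro rfl; exact ⟨hadj, rfl⟩
    rw [hfe, Finset.card_singleton]
  have hnotmE : ∀ v, v ∉ SF → 2 ≤ (sn G SF v).card →
      ∀ r ∈ sn G SF v, ψ r ∉ mext G SF φ v := by
    intro v hv hk r hr
    have hrSF := (mem_sn.1 hr).2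
    rcases (hmemSF r).1 hrSF with heq | heq | heq
    · have hadjvx : G.Adj v x := by have := (mem_sn.1 hr).1; rwa [heq] at this
      have hveq : v = x₁ := hvx₁ v hv hadjvx
      rw [heq, hveq, hψx]
      have hk' : 2 ≤ (sn G SF x₁).card := by rwa [hveq] at hk
      intro hmem
      exact haBadx₁ (by
        rw [bad, if_neg (by omega)]
        exact Multiset.mem_toFinset.2 hmem)
    · have hadjvy : G.Adj v y := by have := (mem_sn.1 hr).1; rwa [heq] at this
      have hvey : v ∈ PCFAux.ext G SF y := mem_ext.2 ⟨hadjvy.symm, hv⟩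
      rw [heq, hψy]
      intro hmem
      exact hbBad v hvey (by
        rw [bad, if_neg (by omega)]
        exact Multiset.mem_toFinset.2 hmem)
    · have hadjvz : G.Adj v z := by have := (mem_sn.1 hr).1; rwa [heq] at this
      have hvez : v ∈ PCFAux.ext G SF z := mem_ext.2 ⟨hadjvz.symm, hv⟩
      rw [heq, hψz]
      intro hmem
      exact hcBad v hvez (by
        rw [bad, if_neg (by omega)]
        exact Multiset.mem_toFinset.2 hmem)
  refine ⟨ψ, (isPCF_iff G 2 ψ).2 ⟨?_, ?_⟩⟩
  · -- properness
    intro u w huw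
    by_cases huSF : u ∈ SF
    · by_cases hwSF : w ∈ SF
      · exact hψSFne u huSF w hwSF (G.ne_of_adj huw)
      · rcases (hmemSF u).1 huSF with heq | heq | heq
        · have hwx₁ : w = x₁ := by
            rcases hx_tri w (by rwa [heq] at huw) with heq2 | heq2 | heq2
            · rw [heq2] at hwSF; exact absurd hySF hwSF
            · rw [heq2] at hwSF; exact absurd hzSF hwSF
            · exact heq2
          rw [heq, hwx₁, hψx, hψo x₁ hx₁SF]
          exact haφx₁
        · have hwe : w ∈ PCFAux.ext G SF y := mem_ext.2 ⟨by rwa [heq] at huw, hwSF⟩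
          rw [heq, hψy, hψo w hwSF]
          intro hcon
          exact hbNy (Finset.mem_image.2 ⟨w, hwe, hcon.symm⟩)
        · have hwe : w ∈ PCFAux.ext G SF z := mem_ext.2 ⟨by rwa [heq] at huw, hwSF⟩
          rw [heq, hψz, hψo w hwSF]
          intro hcon
          exact hcNz (Finset.mem_image.2 ⟨w, hwe, hcon.symm⟩)
    · by_cases hwSF : w ∈ SF
      · rcases (hmemSF w).1 hwSF with heq | heq | heq
        · have hux₁ : u = x₁ := by
            rcases hx_tri u (by rw [heq] at huw; exact huw.symm) with heq2 | heq2 | heq2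
            · rw [heq2] at huSF; exact absurd hySF huSF
            · rw [heq2] at huSF; exact absurd hzSF huSF
            · exact heq2
          rw [heq, hux₁, hψx, hψo x₁ hx₁SF]
          exact Ne.symm haφx₁
        · have hue : u ∈ PCFAux.ext G SF y :=
            mem_ext.2 ⟨by rw [heq] at huw; exact huw.symm, huSF⟩
          rw [heq, hψy, hψo u huSF]
          intro hcon
          exact hbNy (Finset.mem_image.2 ⟨u, hue, hcon⟩)
        · have hue : u ∈ PCFAux.ext G SF z :=
            mem_ext.2 ⟨by rw [heq] at huw; exact huw.symm, huSF⟩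
          rw [heq, hψz, hψo u huSF]
          intro hcon
          exact hcNz (Finset.mem_image.2 ⟨u, hue, hcon⟩)
      · rw [hψo u huSF, hψo w hwSF]
        exact hφp (hradj u w huSF hwSF (G.ne_of_adj huw) (Or.inl huw))
  · -- uniqueness
    intro v
    by_cases hvx : v = x
    · rw [hvx]
      refine le_trans (min_le_left _ _) (two_le_ucnt_of_counts
        (show ψ y ≠ ψ z by rw [hψy, hψz]; exact Ne.symm hcb) ?_ ?_)
      · apply hcnt1 x y hxy
        intro u hu hequ
        rcases hx_tri u hu with heq | heq | heq
        · exact heq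
        · exfalso; rw [heq, hψz, hψy] at hequ; exact hcb hequ
        · exfalso; rw [heq, hψo x₁ hx₁SF, hψy] at hequ; exact hbφx₁ hequ.symm
      · apply hcnt1 x z hxz
        intro u hu hequ
        rcases hx_tri u hu with heq | heq | heq
        · exfalso; rw [heq, hψy, hψz] at hequ; exact hcb hequ.symm
        · exact heq
        · exfalso; rw [heq, hψo x₁ hx₁SF, hψz] at hequ; exact hcφx₁ hequ.symm
    by_cases hvy : v = y
    · rw [hvy]
      refine le_trans (min_le_left _ _) ?_
      by_cases hcim : c ∈ (PCFAux.ext G SF y).image φ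
      · have hygt : 1 < (PCFAux.ext G SF y).card := by
          by_contra hle
          push_neg at hle
          exact hcNy1 (by omega) hcim
        obtain ⟨y₁, hy₁, hy₁c⟩ := Finset.mem_image.1 hcim
        obtain ⟨y₂, hy₂, hy₂ne⟩ := Finset.exists_mem_ne hygt y₁
        have hy₂SF : y₂ ∉ SF := (mem_ext.1 hy₂).2
        refine two_le_ucnt_of_counts
          (show ψ x ≠ ψ y₂ by
            rw [hψx, hψo y₂ hy₂SF]
            intro heq
            exact haNy (Finset.mem_image.2 ⟨y₂, hy₂, heq.symm⟩)) ?_ ?_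
        · apply hcnt1 y x hxy.symm
          intro u hu hequ
          rcases hy_tri u hu with heq | heq | hue
          · exact heq
          · exfalso; rw [heq, hψz, hψx] at hequ; exact hac hequ.symm
          · exfalso
            rw [hψo u (mem_ext.1 hue).2, hψx] at hequ
            exact haNy (Finset.mem_image.2 ⟨u, hue, hequ⟩)
        · apply hcnt1 y y₂ (mem_ext.1 hy₂).1
          intro u hu hequ
          rw [hψo y₂ hy₂SF] at hequ
          rcases hy_tri u hu with heq | heq | hue
          · exfalso; rw [heq, hψx] at hequ
            exact haNy (Finset.mem_image.2 ⟨y₂, hy₂, hequ.symm⟩)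
          · exfalso
            rw [heq, hψz] at hequ
            have heq2 : φ y₁ = φ y₂ := by rw [hy₁c, hequ]
            exact hφS y hySF y₁ hy₁ y₂ hy₂ (Ne.symm hy₂ne) heq2
          · by_contra hne
            rw [hψo u (mem_ext.1 hue).2] at hequ
            exact hφS y hySF u hue y₂ hy₂ hne hequ
      · refine two_le_ucnt_of_counts
          (show ψ x ≠ ψ z by rw [hψx, hψz]; exact hac) ?_ ?_
        · apply hcnt1 y x hxy.symm
          intro u hu hequ
          rcases hy_tri u hu with heq | heq | hue
          · exact heq
          · exfalso; rw [heq, hψz, hψx] at hequ; exact hac hequ.symm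
          · exfalso
            rw [hψo u (mem_ext.1 hue).2, hψx] at hequ
            exact haNy (Finset.mem_image.2 ⟨u, hue, hequ⟩)
        · apply hcnt1 y z hyz
          intro u hu hequ
          rcases hy_tri u hu with heq | heq | hue
          · exfalso; rw [heq, hψx, hψz] at hequ; exact hac hequ
          · exact heq
          · exfalso
            rw [hψo u (mem_ext.1 hue).2, hψz] at hequ
            exact hcim (Finset.mem_image.2 ⟨u, hue, hequ⟩)
    by_cases hvz : v = z
    · rw [hvz]
      refine le_trans (min_le_left _ _) ?_
      by_cases hbim : b ∈ (PCFAux.ext G SF z).image φ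
      · have hzgt : 1 < (PCFAux.ext G SF z).card := by
          by_contra hle
          push_neg at hle
          exact hbNz1 (by omega) hbim
        obtain ⟨z₁, hz₁, hz₁b⟩ := Finset.mem_image.1 hbim
        obtain ⟨z₂, hz₂, hz₂ne⟩ := Finset.exists_mem_ne hzgt z₁
        have hz₂SF : z₂ ∉ SF := (mem_ext.1 hz₂).2
        refine two_le_ucnt_of_counts
          (show ψ x ≠ ψ z₂ by
            rw [hψx, hψo z₂ hz₂SF]
            intro heq
            exact haNz (Finset.mem_image.2 ⟨z₂, hz₂, heq.symm⟩)) ?_ ?_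
        · apply hcnt1 z x hxz.symm
          intro u hu hequ
          rcases hz_tri u hu with heq | heq | hue
          · exact heq
          · exfalso; rw [heq, hψy, hψx] at hequ; exact hab hequ.symm
          · exfalso
            rw [hψo u (mem_ext.1 hue).2, hψx] at hequ
            exact haNz (Finset.mem_image.2 ⟨u, hue, hequ⟩)
        · apply hcnt1 z z₂ (mem_ext.1 hz₂).1
          intro u hu hequ
          rw [hψo z₂ hz₂SF] at hequ
          rcases hz_tri u hu with heq | heq | hue
          · exfalso; rw [heq, hψx] at hequ
            exact haNz (Finset.mem_image.2 ⟨z₂, hz₂, hequ.symm⟩)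
          · exfalso
            rw [heq, hψy] at hequ
            have heq2 : φ z₁ = φ z₂ := by rw [hz₁b, hequ]
            exact hφS z hzSF z₁ hz₁ z₂ hz₂ (Ne.symm hz₂ne) heq2
          · by_contra hne
            rw [hψo u (mem_ext.1 hue).2] at hequ
            exact hφS z hzSF u hue z₂ hz₂ hne hequ
      · refine two_le_ucnt_of_counts
          (show ψ x ≠ ψ y by rw [hψx, hψy]; exact hab) ?_ ?_
        · apply hcnt1 z x hxz.symm
          intro u hu hequ
          rcases hz_tri u hu with heq | heq | hue
          · exact heq
          · exfalso; rw [heq, hψy, hψx] at hequ; exact hab hequ.symm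
          · exfalso
            rw [hψo u (mem_ext.1 hue).2, hψx] at hequ
            exact haNz (Finset.mem_image.2 ⟨u, hue, hequ⟩)
        · apply hcnt1 z y hyz.symm
          intro u hu hequ
          rcases hz_tri u hu with heq | heq | hue
          · exfalso; rw [heq, hψx, hψy] at hequ; exact hab hequ
          · exact heq
          · exfalso
            rw [hψo u (mem_ext.1 hue).2, hψy] at hequ
            exact hbim (Finset.mem_image.2 ⟨u, hue, hequ⟩)
    -- v outside S
    have hvSF : v ∉ SF := by rw [hmemSF]; push_neg; exact ⟨hvx, hvy, hvz⟩
    by_cases hk0 : sn G SF v = ∅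
    · have hnone : ∀ u, G.Adj v u → u ∉ SF := by
        intro u hu hcon
        have hmem : u ∈ sn G SF v := mem_sn.2 ⟨hu, hcon⟩
        rw [hk0] at hmem
        simp at hmem
      have hnbeq : nbF (G.reduce S) v = nbF G v := by
        ext u
        constructor
        · intro hu
          obtain ⟨h1, h2, h3, hor⟩ := (mem_nbF.1 hu :
              v ∉ S ∧ u ∉ S ∧ v ≠ u ∧ (G.Adj v u ∨ ∃ s ∈ S, G.Adj v s ∧ G.Adj s u))
          rcases hor with h' | ⟨s', hs', hadj1, hadj2⟩
          · exact mem_nbF.2 h'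
          · exact absurd ((hmemS s').1 hs') (fun hcon => hnone s' hadj1 hcon)
        · intro hu
          have hadj := mem_nbF.1 hu
          exact mem_nbF.2 (hradj v u hvSF (hnone u hadj) (G.ne_of_adj hadj) (Or.inl hadj))
      have hmeq : mnb G ψ v = mnb (G.reduce S) φ v := by
        rw [mnb, mnb, hnbeq]
        apply Multiset.map_congr rfl
        intro u hu
        exact hψo u (hnone u (mem_nbF.1 (Finset.mem_val.mp hu)))
      rw [hmeq]
      exact hφu v
    · by_cases hk1 : (sn G SF v).card ≤ 1
      · have hc1 : (sn G SF v).card = 1 :=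
          le_antisymm hk1 (Finset.card_pos.2 (Finset.nonempty_iff_ne_empty.2 hk0))
        obtain ⟨s, hsv⟩ := Finset.card_eq_one.1 hc1
        have hsmem : s ∈ sn G SF v := by rw [hsv]; simp
        have hsSF : s ∈ SF := (mem_sn.1 hsmem).2
        have hadj_vs : G.Adj v s := (mem_sn.1 hsmem).1
        have hins : nbF G v = insert s (PCFAux.ext G SF v) := by
          ext u
          simp only [Finset.mem_insert]
          constructor
          · intro hu
            by_cases huSF : u ∈ SF
            · left
              have hm : u ∈ sn G SF v := mem_sn.2 ⟨mem_nbF.1 hu, huSF⟩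
              rw [hsv, Finset.mem_singleton] at hm
              exact hm
            · right; exact mem_ext.2 ⟨mem_nbF.1 hu, huSF⟩
          · rintro (rfl | hu)
            · exact mem_nbF.2 hadj_vs
            · exact mem_nbF.2 (mem_ext.1 hu).1
        have hsnotE : s ∉ PCFAux.ext G SF v := fun hcon => (mem_ext.1 hcon).2 hsSF
        have hmeq : mnb G ψ v = ψ s ::ₘ mext G SF φ v := by
          rw [mnb, hins, Finset.insert_val_of_notMem hsnotE, Multiset.map_cons]
          congr 1
          apply Multiset.map_congr rfl
          intro u hu
          exact hψo u (mem_ext.1 (Finset.mem_val.mp hu)).2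
        have hforb : ψ s ∉ Forb (mext G SF φ v) := by
          have hbadv : bad G SF φ v = Forb (mext G SF φ v) := by
            rw [bad, if_pos (by rw [hsv]; simp)]
          rcases (hmemSF s).1 hsSF with heq | heq | heq
          · have hveq : v = x₁ := hvx₁ v hvSF (by rwa [heq] at hadj_vs)
            rw [heq, hψx]
            intro hcon
            have hbadv' : bad G SF φ x₁ = Forb (mext G SF φ x₁) := by
              rw [← hveq]; exact hbadv
            rw [hveq] at hcon
            exact haBadx₁ (by rw [hbadv']; exact hcon)
          · have hvey : v ∈ PCFAux.ext G SF y :=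
              mem_ext.2 ⟨(show G.Adj v y by rwa [heq] at hadj_vs).symm, hvSF⟩
            rw [heq, hψy]
            intro hcon
            exact hbBad v hvey (by rw [hbadv]; exact hcon)
          · have hvez : v ∈ PCFAux.ext G SF z :=
              mem_ext.2 ⟨(show G.Adj v z by rwa [heq] at hadj_vs).symm, hvSF⟩
            rw [heq, hψz]
            intro hcon
            exact hcBad v hvez (by rw [hbadv]; exact hcon)
        rw [hmeq]
        have hcard : Multiset.card (ψ s ::ₘ mext G SF φ v) =
            Multiset.card (mext G SF φ v) + 1 := by simp
        rw [hcard]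
        exact not_mem_Forb.1 hforb
      · push_neg at hk1
        obtain ⟨p, hp, q, hq, hpq⟩ := Finset.one_lt_card.1 hk1
        have h1 := hnotmE v hvSF (by omega) p hp
        have h2 := hnotmE v hvSF (by omega) q hq
        refine le_trans (min_le_left _ _) (two_le_ucnt_of_counts
          (hψSFne p (mem_sn.1 hp).2 q (mem_sn.1 hq).2 hpq) ?_ ?_)
        · apply hcnt1 v p (mem_sn.1 hp).1
          intro u hu hequ
          by_cases huSF : u ∈ SF
          · by_contra hne
            exact hψSFne u huSF p (mem_sn.1 hp).2 hne hequ
          · exfalso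
            rw [hψo u huSF] at hequ
            exact h1 (mem_mext.2 ⟨u, mem_ext.2 ⟨hu, huSF⟩, hequ⟩)
        · apply hcnt1 v q (mem_sn.1 hq).1
          intro u hu hequ
          by_cases huSF : u ∈ SF
          · by_contra hne
            exact hψSFne u huSF q (mem_sn.1 hq).2 hne hequ
          · exfalso
            rw [hψo u huSF] at hequ
            exact h2 (mem_mext.2 ⟨u, mem_ext.2 ⟨hu, huSF⟩, hequ⟩)

theorem reduce_triangle_with_pendant_four_vertex {V : Type*} [Fintype V]
    (G : SimpleGraph V)
    (hΔ : ∀ u : V, {w | G.Adj u w}.ncard ≤ 4)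
    (x y z x₁ : V)
    (hxy : G.Adj x y) (hyz : G.Adj y z) (hxz : G.Adj x z)
    (hdx : {w | G.Adj x w}.ncard = 3)
    (hxx₁ : G.Adj x x₁) (hx₁y : x₁ ≠ y) (hx₁z : x₁ ≠ z)
    (hdx₁ : {w | G.Adj x₁ w}.ncard = 4)
    (h : (G.reduce {x, y, z}).HasPCFColoring 2 9) :
    G.HasPCFColoring 2 9 := by
  rcases le_total ({w | G.Adj z w} \ {x, y, z}).ncard
      ({w | G.Adj y w} \ {x, y, z}).ncard with hle | hle
  · exact aux_red G hΔ x y z x₁ hxy hyz hxz hdx hxx₁ hx₁y hx₁z hdx₁ hle h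
  · have hsetswap : ({x, z, y} : Set V) = {x, y, z} := by
      ext u; simp; tauto
    refine aux_red G hΔ x z y x₁ hxz hyz.symm hxy hdx hxx₁ hx₁z hx₁y hdx₁ ?_ ?_
    · rw [hsetswap]; exact hle
    · rw [hsetswap]; exact h
end

section
/- Let G be a triangle-free simple graph with maximum degree at most 4 containing a path x–y–z on three distinct vertices, each of degree exactly 3, such that the third neighbor y₁ of y (y₁ ∉ {x, z}) has degree exactly 4. Set S = {x, y, z}. If the S-reduced graph G*S admits a 2-PCF 9-coloring, then G admits a 2-PCF 9-coloring. (This shows a vertex-minimum counterexample has no path on three 3-vertices whose middle vertex is adjacent to a 4-vertex.) -/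
set_option linter.unusedSectionVars false
set_option maxHeartbeats 4000000

open Set

namespace PCFAux
variable {V : Type*} [Fintype V]

noncomputable def uq (g : Fin 9 → ℕ) : ℕ := {c : Fin 9 | g c = 1}.ncard

lemma two_le_uq {g : Fin 9 → ℕ} {c₁ c₂ : Fin 9} (h : c₁ ≠ c₂)
    (h1 : g c₁ = 1) (h2 : g c₂ = 1) : 2 ≤ uq g := by
  have : ({c₁, c₂} : Set (Fin 9)) ⊆ {c | g c = 1} := by
    rintro c (rfl | rfl) <;> simpa
  calc 2 = ({c₁, c₂} : Set (Fin 9)).ncard := (Set.ncard_pair h).symm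
    _ ≤ _ := Set.ncard_le_ncard this (Set.toFinite _)

lemma sum_fibers (R : Set V) (φ : V → Fin 9) :
    ∑ c : Fin 9, {u ∈ R | φ u = c}.ncard = R.ncard := by
  classical
  have hR : R.Finite := Set.toFinite _
  have h1 : ∀ c : Fin 9, {u ∈ R | φ u = c}.ncard
      = (hR.toFinset.filter (fun u => φ u = c)).card := by
    intro c
    rw [← Set.ncard_coe_finset]
    congr 1
    ext u
    simp only [Finset.coe_filter, Set.Finite.mem_toFinset, Set.mem_setOf_eq]
  simp_rw [h1]
  rw [← Finset.card_eq_sum_card_fiberwise (fun u _ => Finset.mem_univ (φ u))]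
  rw [← Set.ncard_coe_finset]; congr 1; simp

lemma fiber_insert (R : Set V) (p : V) (hp : p ∉ R) (f : V → Fin 9) (c : Fin 9) :
    {u ∈ insert p R | f u = c}.ncard
      = {u ∈ R | f u = c}.ncard + (if c = f p then 1 else 0) := by
  by_cases hc : c = f p
  · subst hc
    rw [if_pos rfl]
    have : {u ∈ insert p R | f u = f p} = insert p {u ∈ R | f u = f p} := by
      ext u; simp; tauto
    rw [this, Set.ncard_insert_of_notMem (by simp [hp]) (Set.toFinite _)]
  · rw [if_neg hc]
    have : {u ∈ insert p R | f u = c} = {u ∈ R | f u = c} := by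
      ext u
      simp only [Set.mem_insert_iff, Set.mem_setOf_eq]
      constructor
      · rintro ⟨rfl | hu, hfu⟩
        · exact absurd hfu.symm hc
        · exact ⟨hu, hfu⟩
      · exact fun ⟨hu, hfu⟩ => ⟨Or.inr hu, hfu⟩
    rw [this]; omega


/-- the key lemma : for a count function `g` of total ≤ 3 such that adding some `b₀`
yields at least 2 unique colors, there is a small set `F` of bad colors such that
adding any `c ∉ F` yields at least 2 unique colors. -/
lemma key {g : Fin 9 → ℕ} (htot : ∑ c, g c ≤ 3) {b₀ : Fin 9}
    (hb : 2 ≤ uq (fun c => g c + if c = b₀ then 1 else 0)) :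
    ∃ F : Finset (Fin 9), F.card ≤ 2 ∧
      ∀ c ∉ F, 2 ≤ uq (fun c' => g c' + if c' = c then 1 else 0) := by
  classical
  set U : Set (Fin 9) := {c | g c = 1} with hU
  have hUfin : U.Finite := Set.toFinite _
  have hmono : ∀ c : Fin 9, (U \ {c}).ncard ≤ uq (fun c' => g c' + if c' = c then 1 else 0) := by
    intro c
    apply Set.ncard_le_ncard _ (Set.toFinite _)
    rintro c' ⟨hc', hne⟩
    simp only [Set.mem_singleton_iff] at hne
    simp only [Set.mem_setOf_eq, if_neg hne]
    exact hc'
  by_cases h3 : 3 ≤ U.ncard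
  · refine ⟨∅, by simp, fun c _ => le_trans ?_ (hmono c)⟩
    by_cases hc : c ∈ U
    · rw [Set.ncard_diff_singleton_of_mem hc]; omega
    · rw [Set.diff_singleton_eq_self hc]; omega
  · by_cases h2 : U.ncard = 2
    · refine ⟨hUfin.toFinset, by rw [← Set.ncard_eq_toFinset_card _ hUfin]; omega, fun c hc => ?_⟩
      rw [Set.Finite.mem_toFinset] at hc
      refine le_trans ?_ (hmono c)
      rw [Set.diff_singleton_eq_self hc]; omega
    · -- U.ncard ≤ 1 ; use hb to show U.ncard = 1
      have hsub : {c' : Fin 9 | (g c' + if c' = b₀ then 1 else 0) = 1} ⊆ insert b₀ U := by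
        intro c' hc'
        simp only [Set.mem_setOf_eq] at hc'
        by_cases hcb : c' = b₀
        · exact Or.inl hcb
        · right; simp only [if_neg hcb] at hc'; simpa [hU] using hc'
      have hcard : 2 ≤ (insert b₀ U).ncard :=
        le_trans hb (Set.ncard_le_ncard hsub (Set.toFinite _))
      have hU1 : U.ncard = 1 := by
        have := Set.ncard_insert_le b₀ U
        omega
      obtain ⟨u₀, hu₀⟩ := Set.ncard_eq_one.mp hU1
      have hgu₀ : g u₀ = 1 := by
        have : u₀ ∈ U := by rw [hu₀]; rfl
        exact this
      set F : Finset (Fin 9) := Finset.univ.filter (fun c => g c ≠ 0) with hF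
      have hFcard : F.card ≤ 2 := by
        by_contra hcon
        push_neg at hcon
        have herase : 2 ≤ (F.erase u₀).card := by
          have := Finset.card_erase_of_mem (a := u₀) (s := F)
          by_cases hu : u₀ ∈ F
          · rw [Finset.card_erase_of_mem hu]; omega
          · rw [Finset.erase_eq_of_notMem hu]; omega
        have hterm : ∀ c ∈ F.erase u₀, 2 ≤ g c := by
          intro c hc
          have hne : c ≠ u₀ := Finset.ne_of_mem_erase hc
          have hgc : g c ≠ 0 := by
            have := Finset.mem_of_mem_erase hc
            rw [hF, Finset.mem_filter] at this
            exact this.2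
          have hgc1 : g c ≠ 1 := by
            intro hgc1
            have : c ∈ U := hgc1
            rw [hu₀] at this
            exact hne this
          omega
        have hsum : ∑ c ∈ F.erase u₀, g c ≤ 3 := by
          refine le_trans (Finset.sum_le_sum_of_subset (Finset.subset_univ _)) htot
        have : 2 * (F.erase u₀).card ≤ ∑ c ∈ F.erase u₀, g c := by
          calc 2 * (F.erase u₀).card = ∑ _c ∈ F.erase u₀, 2 := by
                rw [Finset.sum_const, smul_eq_mul, mul_comm]
            _ ≤ _ := Finset.sum_le_sum hterm
        omega
      refine ⟨F, hFcard, fun c hc => ?_⟩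
      have hgc : g c = 0 := by
        by_contra hgc
        exact hc (by rw [hF, Finset.mem_filter]; exact ⟨Finset.mem_univ _, hgc⟩)
      have hne : u₀ ≠ c := fun hh => by rw [hh] at hgu₀; omega
      exact two_le_uq hne (by simp [if_neg hne, hgu₀]) (by simp [hgc])


lemma no_tri {G : SimpleGraph V} (htf : G.CliqueFree 3) {u v w : V}
    (h1 : G.Adj u v) (h2 : G.Adj v w) (h3 : G.Adj u w) : False := by
  classical
  exact htf {u, v, w} (SimpleGraph.is3Clique_iff.mpr ⟨u, v, w, h1, h3, h2, rfl⟩)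

/-- neighborhood in the reduced graph of a vertex not adjacent to `S`. -/
lemma reduce_nbhd_generic {G : SimpleGraph V} {S : Set V} {v : V} (hv : v ∉ S)
    (hAdj : ∀ s ∈ S, ¬ G.Adj v s) :
    {u | (G.reduce S).Adj v u} = {u | G.Adj v u} := by
  ext u
  simp only [Set.mem_setOf_eq, SimpleGraph.reduce]
  constructor
  · rintro ⟨_, _, _, h | ⟨s, hs, h1, _⟩⟩
    · exact h
    · exact absurd h1 (hAdj s hs)
  · intro h
    have hu : u ∉ S := fun hu => hAdj u hu h
    exact ⟨hv, hu, h.ne, Or.inl h⟩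

/-- neighborhood in the reduced graph of a vertex adjacent to exactly `x` in `S = {x,y,z}`,
where `N(x) = {y, v, p}` : it is `(N(v) \ {x}) ∪ {p}`. -/
lemma reduce_nbhd_one {G : SimpleGraph V} (htf : G.CliqueFree 3) {x y z v p : V}
    (hvx : G.Adj v x) (hvy : ¬ G.Adj v y) (hvz : ¬ G.Adj v z)
    (hNx : {w | G.Adj x w} = {y, v, p}) (hvp : v ≠ p)
    (hvS : v ∉ ({x, y, z} : Set V)) (hpS : p ∉ ({x, y, z} : Set V)) :
    {u | (G.reduce {x, y, z}).Adj v u} = insert p ({u | G.Adj v u} \ {x}) := by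
  have hxp : G.Adj x p := by
    have : p ∈ {w | G.Adj x w} := by rw [hNx]; right; right; rfl
    exact this
  have hvp' : ¬ G.Adj v p := fun hh => no_tri htf hvx hxp hh
  ext u
  simp only [Set.mem_setOf_eq, SimpleGraph.reduce, Set.mem_insert_iff, Set.mem_diff,
    Set.mem_singleton_iff]
  constructor
  · rintro ⟨_, huS, hne, h | ⟨s, hs, h1, h2⟩⟩
    · right
      refine ⟨h, ?_⟩
      rintro rfl
      exact huS (Or.inl rfl)
    · -- s ∈ {x,y,z} and G.Adj v s : s = x
      have hsx : s = x := by
        rcases hs with rfl | rfl | rfl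
        · rfl
        · exact absurd h1 hvy
        · exact absurd h1 hvz
      subst hsx
      -- u ∈ N(x) = {y, v, p}, u ∉ S, u ≠ v : u = p
      have hu : u ∈ ({y, v, p} : Set V) := by rw [← hNx]; exact h2
      rcases hu with rfl | rfl | rfl
      · exact absurd (Or.inr (Or.inl rfl)) huS
      · exact absurd rfl hne.symm
      · exact Or.inl rfl
  · rintro (rfl | ⟨h, hne⟩)
    · exact ⟨hvS, hpS, hvp, Or.inr ⟨x, Or.inl rfl, hvx, hxp⟩⟩
    · have huS : u ∉ ({x, y, z} : Set V) := by
        rintro (rfl | rfl | rfl)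
        · exact hne rfl
        · exact hvy h
        · exact hvz h
      exact ⟨hvS, huS, h.ne, Or.inl h⟩

lemma extract_two {N : Set V} {y : V} (h3 : N.ncard = 3) (hy : y ∈ N) :
    ∃ a b, a ≠ b ∧ y ≠ a ∧ y ≠ b ∧ N = {y, a, b} := by
  obtain ⟨p, q, r, hpq, hpr, hqr, rfl⟩ := Set.ncard_eq_three.mp h3
  rcases hy with rfl | rfl | rfl
  · exact ⟨q, r, hqr, hpq, hpr, rfl⟩
  · exact ⟨p, r, hpr, hpq.symm, hqr, by rw [Set.insert_comm]⟩
  · exact ⟨p, q, hpq, hpr.symm, hqr.symm, by ext u; simp; tauto⟩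


lemma exists_notMem (F : Finset (Fin 9)) (h : F.card < 9) : ∃ c, c ∉ F := by
  by_contra hc
  push_neg at hc
  have : F = Finset.univ := Finset.eq_univ_iff_forall.mpr hc
  rw [this, Finset.card_univ, Fintype.card_fin] at h
  omega

lemma choose_colors (A₀ B₀ W : Finset (Fin 9)) (hA : A₀.card ≤ 7) (hB : B₀.card ≤ 7)
    (hW : W.card ≤ 5) :
    ∃ cy cx cz : Fin 9, cy ∉ W ∧ cx ∉ A₀ ∧ cz ∉ B₀ ∧ cx ≠ cy ∧ cz ≠ cy ∧ cx ≠ cz := by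
  classical
  by_cases hAB : A₀ ∪ B₀ ⊆ W
  · have hA5 : A₀.card ≤ 5 := le_trans (Finset.card_le_card
      (le_trans Finset.subset_union_left hAB)) hW
    have hB5 : B₀.card ≤ 5 := le_trans (Finset.card_le_card
      (le_trans Finset.subset_union_right hAB)) hW
    obtain ⟨cy, hcy⟩ := exists_notMem W (by omega)
    obtain ⟨cz, hcz⟩ := exists_notMem (B₀ ∪ {cy}) (by
      have := Finset.card_union_le B₀ {cy}
      simp only [Finset.card_singleton] at this
      omega)
    obtain ⟨cx, hcx⟩ := exists_notMem (A₀ ∪ {cy, cz}) (by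
      have := Finset.card_union_le A₀ {cy, cz}
      have h2 : ({cy, cz} : Finset (Fin 9)).card ≤ 2 := Finset.card_le_two
      omega)
    simp only [Finset.mem_union, Finset.mem_insert, Finset.mem_singleton, not_or] at hcz hcx
    exact ⟨cy, cx, cz, hcy, hcx.1, hcz.1, hcx.2.1, hcz.2, hcx.2.2⟩
  · rw [Finset.not_subset] at hAB
    obtain ⟨cy, hcyAB, hcyW⟩ := hAB
    rw [Finset.mem_union] at hcyAB
    rcases hcyAB with hcyA | hcyB
    · obtain ⟨cz, hcz⟩ := exists_notMem (B₀ ∪ {cy}) (by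
        have := Finset.card_union_le B₀ {cy}
        simp only [Finset.card_singleton] at this
        omega)
      obtain ⟨cx, hcx⟩ := exists_notMem (A₀ ∪ {cz}) (by
        have := Finset.card_union_le A₀ {cz}
        simp only [Finset.card_singleton] at this
        omega)
      simp only [Finset.mem_union, Finset.mem_singleton, not_or] at hcz hcx
      exact ⟨cy, cx, cz, hcyW, hcx.1, hcz.1, fun hh => hcx.1 (hh ▸ hcyA), hcz.2, hcx.2⟩
    · obtain ⟨cx, hcx⟩ := exists_notMem (A₀ ∪ {cy}) (by
        have := Finset.card_union_le A₀ {cy}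
        simp only [Finset.card_singleton] at this
        omega)
      obtain ⟨cz, hcz⟩ := exists_notMem (B₀ ∪ {cx}) (by
        have := Finset.card_union_le B₀ {cx}
        simp only [Finset.card_singleton] at this
        omega)
      simp only [Finset.mem_union, Finset.mem_singleton, not_or] at hcz hcx
      exact ⟨cy, cx, cz, hcyW, hcx.1, hcz.1, hcx.2, fun hh => hcz.1 (hh ▸ hcyB), fun hh => hcz.2 hh.symm⟩

lemma reduce_nbhd_mid {G : SimpleGraph V} {x y z v : V}
    (hvy : G.Adj v y) (hvx : ¬ G.Adj v x) (hvz : ¬ G.Adj v z)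
    (hNy : {w | G.Adj y w} = {x, z, v}) (hvS : v ∉ ({x, y, z} : Set V)) :
    {u | (G.reduce {x, y, z}).Adj v u} = {u | G.Adj v u} \ {y} := by
  ext u
  simp only [Set.mem_setOf_eq, SimpleGraph.reduce, Set.mem_diff, Set.mem_singleton_iff]
  constructor
  · rintro ⟨_, huS, hne, h | ⟨s, hs, h1, h2⟩⟩
    · refine ⟨h, ?_⟩
      rintro rfl
      exact huS (Or.inr (Or.inl rfl))
    · have hsy : s = y := by
        rcases hs with rfl | rfl | rfl
        · exact absurd h1 hvx
        · rfl
        · exact absurd h1 hvz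
      subst hsy
      have hu : u ∈ ({x, z, v} : Set V) := by rw [← hNy]; exact h2
      rcases hu with rfl | rfl | rfl
      · exact absurd (Or.inl rfl) huS
      · exact absurd (Or.inr (Or.inr rfl)) huS
      · exact absurd rfl hne.symm
  · rintro ⟨h, hne⟩
    have huS : u ∉ ({x, y, z} : Set V) := by
      rintro (rfl | rfl | rfl)
      · exact hvx h
      · exact hne rfl
      · exact hvz h
    exact ⟨hvS, huS, h.ne, Or.inl h⟩

lemma fiber_singleton {P : V → Prop} {w : V} (hw : P w) {f : V → Fin 9} {c : Fin 9}
    (hfw : f w = c) (hother : ∀ u, P u → u ≠ w → f u ≠ c) :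
    {u | P u ∧ f u = c} = {w} := by
  ext u
  simp only [Set.mem_setOf_eq, Set.mem_singleton_iff]
  constructor
  · rintro ⟨hP, hf⟩
    by_contra hne
    exact hother u hP hne hf
  · rintro rfl
    exact ⟨hw, hfw⟩


lemma two_uc {G : SimpleGraph V} {v : V} {f : V → Fin 9} {c₁ c₂ : Fin 9} (hne : c₁ ≠ c₂)
    (h1 : {u | G.Adj v u ∧ f u = c₁}.ncard = 1)
    (h2 : {u | G.Adj v u ∧ f u = c₂}.ncard = 1) :
    2 ≤ {c : Fin 9 | {u | G.Adj v u ∧ f u = c}.ncard = 1}.ncard :=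
  two_le_uq (g := fun c => {u | G.Adj v u ∧ f u = c}.ncard) hne h1 h2

lemma distinct_of_pcf {p q r : V} (hpq : p ≠ q) (hpr : p ≠ r) (hqr : q ≠ r)
    {φ : V → Fin 9} {s : Set V} (hs : s = ({p, q, r} : Set V))
    (h2 : 2 ≤ {c : Fin 9 | {u | u ∈ s ∧ φ u = c}.ncard = 1}.ncard) :
    φ p ≠ φ q := by
  subst hs
  intro heq
  have hsub : {c : Fin 9 | {u | u ∈ ({p, q, r} : Set V) ∧ φ u = c}.ncard = 1} ⊆ {φ r} := by
    intro c hc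
    simp only [Set.mem_setOf_eq] at hc
    simp only [Set.mem_singleton_iff]
    by_contra hcr
    by_cases hcp : c = φ p
    · have : ({p, q} : Set V) ⊆ {u | u ∈ ({p, q, r} : Set V) ∧ φ u = c} := by
        rintro u (rfl | rfl)
        · exact ⟨Or.inl rfl, hcp.symm⟩
        · exact ⟨Or.inr (Or.inl rfl), by rw [← heq, hcp]⟩
      have := Set.ncard_le_ncard this (Set.toFinite _)
      rw [Set.ncard_pair hpq] at this
      omega
    · have : {u | u ∈ ({p, q, r} : Set V) ∧ φ u = c} = ∅ := by
        ext u
        simp only [Set.mem_setOf_eq, Set.mem_empty_iff_false, iff_false, not_and]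
        rintro (rfl | rfl | rfl)
        · exact fun hh => hcp hh.symm
        · exact fun hh => hcp (by rw [← hh, heq])
        · exact fun hh => hcr hh.symm
      rw [this, Set.ncard_empty] at hc
      omega
  have := Set.ncard_le_ncard hsub (Set.toFinite _)
  rw [Set.ncard_singleton] at this
  omega


/-- PCF transfer for a vertex `v` adjacent (within `S`) to exactly `x`. -/
lemma aux_main {G : SimpleGraph V} (htf : G.CliqueFree 3)
    (hΔ : ∀ u : V, {w | G.Adj u w}.ncard ≤ 4)
    {x y z v p : V}
    (hvx : G.Adj v x) (hvy : ¬ G.Adj v y) (hvz : ¬ G.Adj v z)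
    (hNx : {w | G.Adj x w} = {y, v, p}) (hvp : v ≠ p)
    (hvS : v ∉ ({x, y, z} : Set V)) (hpS : p ∉ ({x, y, z} : Set V))
    (φ : V → Fin 9)
    (hPCF : min 2 {u | (G.reduce {x,y,z}).Adj v u}.ncard ≤
      {c : Fin 9 | {u | (G.reduce {x,y,z}).Adj v u ∧ φ u = c}.ncard = 1}.ncard) :
    ∃ F : Finset (Fin 9), F.card ≤ 2 ∧ ∀ ψ : V → Fin 9,
      (∀ u, u ∉ ({x, y, z} : Set V) → ψ u = φ u) → ψ x ∉ F →
      min 2 {u | G.Adj v u}.ncard ≤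
        {c : Fin 9 | {u | G.Adj v u ∧ ψ u = c}.ncard = 1}.ncard := by
  classical
  set R : Set V := {u | G.Adj v u} \ {x} with hR
  have hxR : x ∉ R := by simp [hR]
  have hRS : ∀ u ∈ R, u ∉ ({x, y, z} : Set V) := by
    rintro u ⟨hadj, hux⟩ (rfl | rfl | rfl)
    · exact hux rfl
    · exact hvy hadj
    · exact hvz hadj
  have hNv : {u | G.Adj v u} = insert x R := by
    ext u
    simp only [Set.mem_setOf_eq, hR, Set.mem_insert_iff, Set.mem_diff,
      Set.mem_singleton_iff]
    constructor
    · intro hadj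
      by_cases hux : u = x
      · exact Or.inl hux
      · exact Or.inr ⟨hadj, hux⟩
    · rintro (rfl | ⟨hadj, _⟩)
      · exact hvx
      · exact hadj
  have hxp : G.Adj x p := by
    have : p ∈ {w | G.Adj x w} := by rw [hNx]; right; right; rfl
    exact this
  have hpR : p ∉ R := by
    rintro ⟨hadj, _⟩
    exact no_tri htf hvx hxp hadj
  have hred : {u | (G.reduce {x,y,z}).Adj v u} = insert p R :=
    reduce_nbhd_one htf hvx hvy hvz hNx hvp hvS hpS
  have hcardR : R.ncard ≤ 3 := by
    have hxN : x ∈ {u | G.Adj v u} := hvx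
    have := Set.ncard_diff_singleton_of_mem hxN
    have h4 := hΔ v
    rw [hR, this]
    omega
  set g : Fin 9 → ℕ := fun c => {u ∈ R | φ u = c}.ncard with hg
  have htot : ∑ c, g c ≤ 3 := by rw [hg]; rw [sum_fibers]; exact hcardR
  -- the unique-color count in the reduced graph
  have hucstar : {c : Fin 9 | {u | (G.reduce {x,y,z}).Adj v u ∧ φ u = c}.ncard = 1}.ncard
      = uq (fun c => g c + if c = φ p then 1 else 0) := by
    unfold uq
    congr 1
    ext c
    have : {u | (G.reduce {x,y,z}).Adj v u ∧ φ u = c} = {u ∈ insert p R | φ u = c} := by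
      rw [show {u | (G.reduce {x,y,z}).Adj v u ∧ φ u = c}
          = {u ∈ {u | (G.reduce {x,y,z}).Adj v u} | φ u = c} from rfl, hred]
    simp only [Set.mem_setOf_eq, this, fiber_insert R p hpR φ c]
    exact Iff.rfl
  -- the unique-color count in `G` for any recoloring agreeing with `φ` off `S`
  have hucG : ∀ ψ : V → Fin 9, (∀ u, u ∉ ({x, y, z} : Set V) → ψ u = φ u) →
      {c : Fin 9 | {u | G.Adj v u ∧ ψ u = c}.ncard = 1}.ncard
        = uq (fun c => g c + if c = ψ x then 1 else 0) := by
    intro ψ hoff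
    unfold uq
    congr 1
    ext c
    have h1 : {u | G.Adj v u ∧ ψ u = c} = {u ∈ insert x R | ψ u = c} := by
      rw [show {u | G.Adj v u ∧ ψ u = c} = {u ∈ {u | G.Adj v u} | ψ u = c} from rfl, hNv]
    have h2 : {u ∈ R | ψ u = c} = {u ∈ R | φ u = c} := by
      ext u
      simp only [Set.mem_setOf_eq]
      constructor
      · rintro ⟨hu, hc⟩; exact ⟨hu, by rw [← hoff u (hRS u hu)]; exact hc⟩
      · rintro ⟨hu, hc⟩; exact ⟨hu, by rw [hoff u (hRS u hu)]; exact hc⟩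
    simp only [Set.mem_setOf_eq, h1, fiber_insert R x hxR ψ c, h2]
    exact Iff.rfl
  by_cases hR0 : R.ncard = 0
  · -- v has degree 1 in G
    refine ⟨∅, by simp, fun ψ hoff _ => ?_⟩
    have hRemp : R = ∅ := (Set.ncard_eq_zero (Set.toFinite _)).mp hR0
    have hN1 : {u | G.Adj v u}.ncard = 1 := by
      rw [hNv, hRemp]
      simp
    rw [hN1, hucG ψ hoff]
    have hmem : (fun c => g c + if c = ψ x then 1 else 0) (ψ x) = 1 := by
      simp [hg, hRemp]
    have hpos : 0 < uq (fun c => g c + if c = ψ x then 1 else 0) := by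
      unfold uq
      rw [Set.ncard_pos (Set.toFinite _)]
      exact ⟨ψ x, hmem⟩
    have hmin : min 2 1 = 1 := rfl
    rw [hmin]
    exact hpos
  · -- v has degree ≥ 2 ; use `key`
    have hb : 2 ≤ uq (fun c => g c + if c = φ p then 1 else 0) := by
      rw [← hucstar]
      refine le_trans ?_ hPCF
      rw [hred, Set.ncard_insert_of_notMem hpR (Set.toFinite _)]
      omega
    obtain ⟨F, hFcard, hkey⟩ := key htot hb
    refine ⟨F, hFcard, fun ψ hoff hψx => ?_⟩
    rw [hucG ψ hoff, hNv, Set.ncard_insert_of_notMem hxR (Set.toFinite _)]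
    have := hkey (ψ x) hψx
    omega

/-- PCF transfer for a vertex `v` adjacent (within `S`) to both `x` and `z`. -/
lemma aux_both {G : SimpleGraph V} {x y z v : V}
    (hvx : G.Adj v x) (hvy : ¬ G.Adj v y) (hvz : G.Adj v z) (hxz : x ≠ z)
    (hΔ : ∀ u : V, {w | G.Adj u w}.ncard ≤ 4)
    (φ : V → Fin 9) :
    ∃ F : Finset (Fin 9), F.card ≤ 2 ∧ ∀ ψ : V → Fin 9,
      (∀ u, u ∉ ({x, y, z} : Set V) → ψ u = φ u) → ψ x ∉ F → ψ z ∉ F → ψ x ≠ ψ z →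
      min 2 {u | G.Adj v u}.ncard ≤
        {c : Fin 9 | {u | G.Adj v u ∧ ψ u = c}.ncard = 1}.ncard := by
  classical
  set R : Set V := {u | G.Adj v u} \ {x, z} with hR
  have hRS : ∀ u ∈ R, u ∉ ({x, y, z} : Set V) := by
    rintro u ⟨hadj, hu⟩ (rfl | rfl | rfl)
    · exact hu (Or.inl rfl)
    · exact hvy hadj
    · exact hu (Or.inr rfl)
  have hcardR : R.ncard ≤ 2 := by
    have hsub : ({x, z} : Set V) ⊆ {u | G.Adj v u} := by
      rintro u (rfl | rfl)
      · exact hvx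
      · exact hvz
    have := Set.ncard_diff hsub (Set.toFinite _)
    have h4 := hΔ v
    have hp : ({x, z} : Set V).ncard = 2 := Set.ncard_pair hxz
    rw [hR, this, hp]
    omega
  refine ⟨(Set.toFinite R).toFinset.image φ, ?_, fun ψ hoff hψx hψz hψxz => ?_⟩
  · calc ((Set.toFinite R).toFinset.image φ).card ≤ (Set.toFinite R).toFinset.card :=
        Finset.card_image_le
      _ = R.ncard := (Set.ncard_eq_toFinset_card _ _).symm
      _ ≤ 2 := hcardR
  · have hfresh : ∀ u ∈ R, φ u ≠ ψ x ∧ φ u ≠ ψ z := by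
      intro u hu
      have hmem : φ u ∈ (Set.toFinite R).toFinset.image φ :=
        Finset.mem_image_of_mem φ ((Set.Finite.mem_toFinset _).mpr hu)
      constructor
      · intro hq; rw [hq] at hmem; exact hψx hmem
      · intro hq; rw [hq] at hmem; exact hψz hmem
    have hfibx : {u | G.Adj v u ∧ ψ u = ψ x} = {x} := by
      ext u
      simp only [Set.mem_setOf_eq, Set.mem_singleton_iff]
      constructor
      · rintro ⟨hadj, hc⟩
        by_contra hux
        by_cases huz : u = z
        · subst huz; exact hψxz hc.symm
        · have huR : u ∈ R := ⟨hadj, by rintro (rfl | rfl) <;> simp_all⟩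
          have := (hfresh u huR).1
          rw [hoff u (hRS u huR)] at hc
          exact this hc
      · rintro rfl; exact ⟨hvx, rfl⟩
    have hfibz : {u | G.Adj v u ∧ ψ u = ψ z} = {z} := by
      ext u
      simp only [Set.mem_setOf_eq, Set.mem_singleton_iff]
      constructor
      · rintro ⟨hadj, hc⟩
        by_contra huz
        by_cases hux : u = x
        · subst hux; exact hψxz hc
        · have huR : u ∈ R := ⟨hadj, by rintro (rfl | rfl) <;> simp_all⟩
          have := (hfresh u huR).2
          rw [hoff u (hRS u huR)] at hc
          exact this hc
      · rintro rfl; exact ⟨hvz, rfl⟩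
    have h2 : ({ψ x, ψ z} : Set (Fin 9)) ⊆
        {c : Fin 9 | {u | G.Adj v u ∧ ψ u = c}.ncard = 1} := by
      rintro c (rfl | rfl)
      · show _ = 1
        rw [hfibx]; simp
      · show _ = 1
        rw [hfibz]; simp
    have : 2 ≤ {c : Fin 9 | {u | G.Adj v u ∧ ψ u = c}.ncard = 1}.ncard := by
      calc 2 = ({ψ x, ψ z} : Set (Fin 9)).ncard := (Set.ncard_pair hψxz).symm
        _ ≤ _ := Set.ncard_le_ncard h2 (Set.toFinite _)
    omega

/-- PCF transfer at the special degree-4 vertex `y₁`. -/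
lemma y1_block {G : SimpleGraph V} {x y z y₁ : V} (φ ψ : V → Fin 9) (cy : Fin 9)
    (hyy₁ : G.Adj y y₁) (hny₁x : ¬ G.Adj y₁ x) (hny₁z : ¬ G.Adj y₁ z)
    (hNy : {w | G.Adj y w} = {x, z, y₁}) (hy₁S : y₁ ∉ ({x, y, z} : Set V))
    (hdy₁ : {w | G.Adj y₁ w}.ncard = 4)
    (hoff : ∀ u, u ∉ ({x, y, z} : Set V) → ψ u = φ u) (hψy : ψ y = cy)
    (hcyy₁ : cy ≠ φ y₁)
    (hpcfy₁ : min 2 {u | (G.reduce {x, y, z}).Adj y₁ u}.ncard ≤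
      {c : Fin 9 | {u | (G.reduce {x, y, z}).Adj y₁ u ∧ φ u = c}.ncard = 1}.ncard) :
    min 2 {u | G.Adj y₁ u}.ncard ≤
      {c : Fin 9 | {u | G.Adj y₁ u ∧ ψ u = c}.ncard = 1}.ncard := by
  classical
set R₁ : Set V := {u | G.Adj y₁ u} \ {y} with hR₁def
have hstar : {u | (G.reduce {x, y, z}).Adj y₁ u} = R₁ :=
  reduce_nbhd_mid hyy₁.symm hny₁x hny₁z hNy hy₁S
have hyR : y ∉ R₁ := by simp [hR₁def]
have hNy₁ : {u | G.Adj y₁ u} = insert y R₁ := by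
  ext u
  simp only [Set.mem_setOf_eq, hR₁def, Set.mem_insert_iff, Set.mem_diff,
    Set.mem_singleton_iff]
  constructor
  · intro hadj
    by_cases huy : u = y
    · exact Or.inl huy
    · exact Or.inr ⟨hadj, huy⟩
  · rintro (rfl | ⟨hadj, _⟩)
    · exact hyy₁.symm
    · exact hadj
have hcardR₁ : R₁.ncard = 3 := by
  have hmem : y ∈ {u | G.Adj y₁ u} := hyy₁.symm
  have hh1 := Set.ncard_diff_singleton_of_mem hmem
  rw [hdy₁] at hh1
  rw [hR₁def, hh1]
have hRS₁ : ∀ u ∈ R₁, u ∉ ({x, y, z} : Set V) := by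
  rintro u ⟨hadj, hne⟩ (rfl | rfl | rfl)
  · exact hny₁x hadj
  · exact hne rfl
  · exact hny₁z hadj
obtain ⟨p, q, r, hpq, hpr, hqr, hR₁⟩ := Set.ncard_eq_three.mp hcardR₁
have h2star : 2 ≤ {c : Fin 9 | {u | u ∈ R₁ ∧ φ u = c}.ncard = 1}.ncard := by
  have hthis := hpcfy₁
  have e1 : ∀ cc : Fin 9, {u | (G.reduce {x, y, z}).Adj y₁ u ∧ φ u = cc}
      = {u | u ∈ R₁ ∧ φ u = cc} := by
    intro cc
    rw [show {u | (G.reduce {x, y, z}).Adj y₁ u ∧ φ u = cc}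
      = {u ∈ {u | (G.reduce {x, y, z}).Adj y₁ u} | φ u = cc} from rfl, hstar]
  have e2 : {c : Fin 9 | {u | (G.reduce {x, y, z}).Adj y₁ u ∧ φ u = c}.ncard = 1}
      = {c : Fin 9 | {u | u ∈ R₁ ∧ φ u = c}.ncard = 1} := by
    ext cc
    simp only [Set.mem_setOf_eq, e1 cc]
  rw [e2] at hthis
  rw [hstar, hcardR₁] at hthis
  have hm : min 2 3 = 2 := by norm_num
  rwa [hm] at hthis
have hφpq : φ p ≠ φ q := distinct_of_pcf hpq hpr hqr hR₁ h2star
have hφpr : φ p ≠ φ r := by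
  refine distinct_of_pcf hpr hpq hqr.symm ?_ h2star
  rw [hR₁]; ext u; simp only [Set.mem_insert_iff, Set.mem_singleton_iff]; tauto
have hφqr : φ q ≠ φ r := by
  refine distinct_of_pcf hqr hpq.symm hpr.symm ?_ h2star
  rw [hR₁]; ext u; simp only [Set.mem_insert_iff, Set.mem_singleton_iff]; tauto
have hmemp : p ∈ R₁ := by rw [hR₁]; left; rfl
have hmemq : q ∈ R₁ := by rw [hR₁]; right; left; rfl
have hmemr : r ∈ R₁ := by rw [hR₁]; right; right; rfl
have hadjR : ∀ u ∈ R₁, G.Adj y₁ u := fun u hu => hu.1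
have hψR : ∀ u ∈ R₁, ψ u = φ u := fun u hu => hoff u (hRS₁ u hu)
have fib : ∀ w₀ ∈ R₁, ∀ c0 : Fin 9, φ w₀ = c0 → cy ≠ c0 →
    (∀ u ∈ R₁, u ≠ w₀ → φ u ≠ c0) →
    {u | G.Adj y₁ u ∧ ψ u = c0}.ncard = 1 := by
  intro w₀ hw₀ c0 hφw₀ hcy0 hothers
  rw [fiber_singleton (hadjR w₀ hw₀)
    (by rw [hψR w₀ hw₀]; exact hφw₀) ?_]
  · exact Set.ncard_singleton _
  · intro u hu hne
    have : u ∈ insert y R₁ := by rw [← hNy₁]; exact hu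
    rcases this with rfl | huR
    · rw [hψy]; exact hcy0
    · rw [hψR u huR]; exact hothers u huR hne
rw [hdy₁]
have hm : min 2 4 = 2 := by norm_num
rw [hm]
by_cases hc1 : cy = φ p
· refine two_uc hφqr ?_ ?_
  · refine fib q hmemq _ rfl (by rw [hc1]; exact hφpq) ?_
    intro u hu hne
    rw [hR₁] at hu
    rcases hu with rfl | rfl | rfl
    · exact hφpq
    · exact absurd rfl hne
    · exact hφqr.symm
  · refine fib r hmemr _ rfl (by rw [hc1]; exact hφpr) ?_
    intro u hu hne
    rw [hR₁] at hu
    rcases hu with rfl | rfl | rfl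
    · exact hφpr
    · exact hφqr
    · exact absurd rfl hne
by_cases hc2 : cy = φ q
· refine two_uc hφpr ?_ ?_
  · refine fib p hmemp _ rfl (by rw [hc2]; exact hφpq.symm) ?_
    intro u hu hne
    rw [hR₁] at hu
    rcases hu with rfl | rfl | rfl
    · exact absurd rfl hne
    · exact hφpq.symm
    · exact hφpr.symm
  · refine fib r hmemr _ rfl (by rw [hc2]; exact hφqr) ?_
    intro u hu hne
    rw [hR₁] at hu
    rcases hu with rfl | rfl | rfl
    · exact hφpr
    · exact hφqr
    · exact absurd rfl hne
· refine two_uc hφpq ?_ ?_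
  · refine fib p hmemp _ rfl hc1 ?_
    intro u hu hne
    rw [hR₁] at hu
    rcases hu with rfl | rfl | rfl
    · exact absurd rfl hne
    · exact hφpq.symm
    · exact hφpr.symm
  · refine fib q hmemq _ rfl hc2 ?_
    intro u hu hne
    rw [hR₁] at hu
    rcases hu with rfl | rfl | rfl
    · exact hφpq
    · exact absurd rfl hne
    · exact hφqr.symm

end PCFAux

theorem reduce_path_three_three_vertices {V : Type*} [Fintype V]
    (G : SimpleGraph V)
    (hΔ : ∀ u : V, {w | G.Adj u w}.ncard ≤ 4)
    (htf : G.CliqueFree 3)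
    (x y z y₁ : V)
    (hxy : G.Adj x y) (hyz : G.Adj y z) (hxz : x ≠ z)
    (hdx : {w | G.Adj x w}.ncard = 3)
    (hdy : {w | G.Adj y w}.ncard = 3)
    (hdz : {w | G.Adj z w}.ncard = 3)
    (hyy₁ : G.Adj y y₁) (hy₁x : y₁ ≠ x) (hy₁z : y₁ ≠ z)
    (hdy₁ : {w | G.Adj y₁ w}.ncard = 4)
    (h : (G.reduce {x, y, z}).HasPCFColoring 2 9) :
    G.HasPCFColoring 2 9 := by
  classical
  obtain ⟨φ, hproper, hpcfA⟩ := h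
  have hnxz : ¬ G.Adj x z := fun h' => PCFAux.no_tri htf hxy hyz h'
  have hxy' : x ≠ y := hxy.ne
  have hyz' : y ≠ z := hyz.ne
  have hy₁y : y₁ ≠ y := hyy₁.ne'
  -- neighborhood of y
  have hNy : {w | G.Adj y w} = {x, z, y₁} := by
    symm
    apply Set.eq_of_subset_of_ncard_le
    · rintro u (rfl | rfl | rfl)
      exacts [hxy.symm, hyz, hyy₁]
    · rw [hdy]
      have h1 : ({x, z, y₁} : Set V).ncard = 3 := by
        rw [Set.ncard_insert_of_notMem (by simp [hxz, Ne.symm hy₁x]) (Set.toFinite _),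
          Set.ncard_pair (Ne.symm hy₁z)]
      omega
    · exact Set.toFinite _
  -- neighborhoods of x and z
  obtain ⟨a, b, hab, hya, hyb, hNx⟩ :=
    PCFAux.extract_two hdx (show y ∈ {w | G.Adj x w} from hxy)
  obtain ⟨c, d, hcd, hyc, hyd, hNz⟩ :=
    PCFAux.extract_two hdz (show y ∈ {w | G.Adj z w} from hyz.symm)
  have hxa : G.Adj x a := by
    have : a ∈ {w | G.Adj x w} := by rw [hNx]; right; left; rfl
    exact this
  have hxb : G.Adj x b := by
    have : b ∈ {w | G.Adj x w} := by rw [hNx]; right; right; rfl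
    exact this
  have hzc : G.Adj z c := by
    have : c ∈ {w | G.Adj z w} := by rw [hNz]; right; left; rfl
    exact this
  have hzd : G.Adj z d := by
    have : d ∈ {w | G.Adj z w} := by rw [hNz]; right; right; rfl
    exact this
  have haS : a ∉ ({x, y, z} : Set V) := by
    rintro (rfl | rfl | rfl)
    · exact hxa.ne rfl
    · exact hya rfl
    · exact hnxz hxa
  have hbS : b ∉ ({x, y, z} : Set V) := by
    rintro (rfl | rfl | rfl)
    · exact hxb.ne rfl
    · exact hyb rfl
    · exact hnxz hxb
  have hcS : c ∉ ({x, y, z} : Set V) := by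
    rintro (rfl | rfl | rfl)
    · exact hnxz hzc.symm
    · exact hyc rfl
    · exact hzc.ne rfl
  have hdS : d ∉ ({x, y, z} : Set V) := by
    rintro (rfl | rfl | rfl)
    · exact hnxz hzd.symm
    · exact hyd rfl
    · exact hzd.ne rfl
  have hy₁S : y₁ ∉ ({x, y, z} : Set V) := by
    rintro (rfl | rfl | rfl)
    · exact hy₁x rfl
    · exact hy₁y rfl
    · exact hy₁z rfl
  have hny₁x : ¬ G.Adj y₁ x := fun h' => PCFAux.no_tri htf hxy hyy₁ h'.symm
  have hny₁z : ¬ G.Adj y₁ z := fun h' => PCFAux.no_tri htf hyz.symm hyy₁ h'.symm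
  have hnay : ¬ G.Adj a y := fun h' => PCFAux.no_tri htf hxa.symm hxy h'
  have hnby : ¬ G.Adj b y := fun h' => PCFAux.no_tri htf hxb.symm hxy h'
  have hncy : ¬ G.Adj c y := fun h' => PCFAux.no_tri htf hzc.symm hyz.symm h'
  have hndy : ¬ G.Adj d y := fun h' => PCFAux.no_tri htf hzd.symm hyz.symm h'
  -- colors of `a,b` and `c,d` are distinct (edges added in the reduced graph)
  have hpab : φ a ≠ φ b :=
    hproper (by simp only [SimpleGraph.reduce]; exact ⟨haS, hbS, hab, Or.inr ⟨x, Or.inl rfl, hxa.symm, hxb⟩⟩)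
  have hpcd : φ c ≠ φ d :=
    hproper (by simp only [SimpleGraph.reduce]; exact ⟨hcS, hdS, hcd, Or.inr ⟨z, Or.inr (Or.inr rfl), hzc.symm, hzd⟩⟩)
  -- the property `Q v F` : `F` is a good forbidden set for vertex `v`
  set Q : V → Finset (Fin 9) → Prop := fun v F => F.card ≤ 2 ∧ ∀ ψ : V → Fin 9,
    (∀ u, u ∉ ({x, y, z} : Set V) → ψ u = φ u) →
    (G.Adj v x → ψ x ∉ F) → (G.Adj v z → ψ z ∉ F) → ψ x ≠ ψ z →
    min 2 {u | G.Adj v u}.ncard ≤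
      {c : Fin 9 | {u | G.Adj v u ∧ ψ u = c}.ncard = 1}.ncard with hQdef
  have hswap : ({z, y, x} : Set V) = {x, y, z} := by
    ext u
    simp only [Set.mem_insert_iff, Set.mem_singleton_iff]
    tauto
  -- building `Q` for a vertex adjacent to `x` only
  have mkQx : ∀ v p : V, {w | G.Adj x w} = {y, v, p} → v ≠ p →
      v ∉ ({x, y, z} : Set V) → p ∉ ({x, y, z} : Set V) →
      G.Adj v x → ¬ G.Adj v y → ¬ G.Adj v z → ∃ F, Q v F := by
    intro v p hN hvp hvS hpS hvx hvy hvz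
    obtain ⟨F, hc, hf⟩ := PCFAux.aux_main htf hΔ hvx hvy hvz hN hvp hvS hpS φ (hpcfA v)
    exact ⟨F, hc, fun ψ hoff h1 _ _ => hf ψ hoff (h1 hvx)⟩
  -- building `Q` for a vertex adjacent to `z` only
  have mkQz : ∀ v p : V, {w | G.Adj z w} = {y, v, p} → v ≠ p →
      v ∉ ({x, y, z} : Set V) → p ∉ ({x, y, z} : Set V) →
      G.Adj v z → ¬ G.Adj v y → ¬ G.Adj v x → ∃ F, Q v F := by
    intro v p hN hvp hvS hpS hvz hvy hvx
    have hpcf' : min 2 {u | (G.reduce {z, y, x}).Adj v u}.ncard ≤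
        {c : Fin 9 | {u | (G.reduce {z, y, x}).Adj v u ∧ φ u = c}.ncard = 1}.ncard := by
      rw [hswap]; exact hpcfA v
    obtain ⟨F, hc, hf⟩ := PCFAux.aux_main htf hΔ hvz hvy hvx hN hvp
      (by rw [hswap]; exact hvS) (by rw [hswap]; exact hpS) φ hpcf'
    refine ⟨F, hc, fun ψ hoff _ h2 _ => ?_⟩
    exact hf ψ (fun u hu => hoff u (by rwa [hswap] at hu)) (h2 hvz)
  -- building `Q` for a vertex adjacent to both `x` and `z`
  have mkQb : ∀ v : V, G.Adj v x → ¬ G.Adj v y → G.Adj v z → ∃ F, Q v F := by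
    intro v hvx hvy hvz
    obtain ⟨F, hc, hf⟩ := PCFAux.aux_both hvx hvy hvz hxz hΔ φ
    exact ⟨F, hc, fun ψ hoff h1 h2 h3 => hf ψ hoff (h1 hvx) (h2 hvz) h3⟩
  -- forbidden sets for a, b, c, d
  have HA : ∃ F, Q a F := by
    by_cases haz : G.Adj a z
    · exact mkQb a hxa.symm hnay haz
    · exact mkQx a b hNx hab haS hbS hxa.symm hnay haz
  obtain ⟨Fa, QA⟩ := HA
  have HB : ∃ F, Q b F := by
    have hNx' : {w | G.Adj x w} = {y, b, a} := by
      rw [hNx]; ext u; simp only [Set.mem_insert_iff, Set.mem_singleton_iff]; tauto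
    by_cases hbz : G.Adj b z
    · exact mkQb b hxb.symm hnby hbz
    · exact mkQx b a hNx' hab.symm hbS haS hxb.symm hnby hbz
  obtain ⟨Fb, QB⟩ := HB
  have HC : ∃ F, Q c F ∧ (c = a → F = Fa) ∧ (c = b → F = Fb) := by
    by_cases hca : c = a
    · exact ⟨Fa, by rw [hca]; exact QA, fun _ => rfl,
        fun hcb => absurd (hca.symm.trans hcb) hab⟩
    · by_cases hcb : c = b
      · exact ⟨Fb, by rw [hcb]; exact QB, fun hca' => absurd hca' hca, fun _ => rfl⟩
      · have hncx : ¬ G.Adj c x := by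
          intro h'
          have : c ∈ {w | G.Adj x w} := h'.symm
          rw [hNx] at this
          rcases this with h | h | h
          · exact hyc h.symm
          · exact hca h
          · exact hcb h
        obtain ⟨F, hQ'⟩ := mkQz c d hNz hcd hcS hdS hzc.symm hncy hncx
        exact ⟨F, hQ', fun h' => absurd h' hca, fun h' => absurd h' hcb⟩
  obtain ⟨Fc, QC, tagCA, tagCB⟩ := HC
  have HD : ∃ F, Q d F ∧ (d = a → F = Fa) ∧ (d = b → F = Fb) := by
    by_cases hda : d = a
    · exact ⟨Fa, by rw [hda]; exact QA, fun _ => rfl,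
        fun hdb => absurd (hda.symm.trans hdb) hab⟩
    · by_cases hdb : d = b
      · exact ⟨Fb, by rw [hdb]; exact QB, fun hda' => absurd hda' hda, fun _ => rfl⟩
      · have hndx : ¬ G.Adj d x := by
          intro h'
          have : d ∈ {w | G.Adj x w} := h'.symm
          rw [hNx] at this
          rcases this with h' | h' | h'
          · exact hyd h'.symm
          · exact hda h'
          · exact hdb h'
        have hNz' : {w | G.Adj z w} = {y, d, c} := by
          rw [hNz]; ext u; simp only [Set.mem_insert_iff, Set.mem_singleton_iff]; tauto
        obtain ⟨F, hQ'⟩ := mkQz d c hNz' hcd.symm hdS hcS hzd.symm hndy hndx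
        exact ⟨F, hQ', fun h' => absurd h' hda, fun h' => absurd h' hdb⟩
  obtain ⟨Fd, QD, tagDA, tagDB⟩ := HD
  -- cardinality bounds for the selection
  have hA7 : (({φ y₁, φ a, φ b} : Finset (Fin 9)) ∪ Fa ∪ Fb).card ≤ 7 := by
    have h1 := Finset.card_union_le (({φ y₁, φ a, φ b} : Finset (Fin 9)) ∪ Fa) Fb
    have h2 := Finset.card_union_le ({φ y₁, φ a, φ b} : Finset (Fin 9)) Fa
    have h3 : ({φ y₁, φ a, φ b} : Finset (Fin 9)).card ≤ 3 := by
      have := Finset.card_insert_le (φ y₁) ({φ a, φ b} : Finset (Fin 9))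
      have h4 : ({φ a, φ b} : Finset (Fin 9)).card ≤ 2 := Finset.card_le_two
      omega
    have := QA.1
    have := QB.1
    omega
  have hB7 : (({φ y₁, φ c, φ d} : Finset (Fin 9)) ∪ Fc ∪ Fd).card ≤ 7 := by
    have h1 := Finset.card_union_le (({φ y₁, φ c, φ d} : Finset (Fin 9)) ∪ Fc) Fd
    have h2 := Finset.card_union_le ({φ y₁, φ c, φ d} : Finset (Fin 9)) Fc
    have h3 : ({φ y₁, φ c, φ d} : Finset (Fin 9)).card ≤ 3 := by
      have := Finset.card_insert_le (φ y₁) ({φ c, φ d} : Finset (Fin 9))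
      have h4 : ({φ c, φ d} : Finset (Fin 9)).card ≤ 2 := Finset.card_le_two
      omega
    have := QC.1
    have := QD.1
    omega
  have hW5 : ({φ a, φ b, φ c, φ d, φ y₁} : Finset (Fin 9)).card ≤ 5 := by
    have h1 := Finset.card_insert_le (φ a) ({φ b, φ c, φ d, φ y₁} : Finset (Fin 9))
    have h2 := Finset.card_insert_le (φ b) ({φ c, φ d, φ y₁} : Finset (Fin 9))
    have h3 := Finset.card_insert_le (φ c) ({φ d, φ y₁} : Finset (Fin 9))
    have h4 : ({φ d, φ y₁} : Finset (Fin 9)).card ≤ 2 := Finset.card_le_two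
    omega
  obtain ⟨cy, cx, cz, hcyW, hcxA, hczB, hcxy, hczy, hcxz⟩ :=
    PCFAux.choose_colors (({φ y₁, φ a, φ b} : Finset (Fin 9)) ∪ Fa ∪ Fb)
      (({φ y₁, φ c, φ d} : Finset (Fin 9)) ∪ Fc ∪ Fd)
      ({φ a, φ b, φ c, φ d, φ y₁} : Finset (Fin 9)) hA7 hB7 hW5
  simp only [Finset.mem_union, Finset.mem_insert, Finset.mem_singleton, not_or] at hcyW hcxA hczB
  obtain ⟨hcya, hcyb, hcyc, hcyd, hcyy₁⟩ := hcyW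
  obtain ⟨⟨⟨hcxy₁, hcxa, hcxb⟩, hcxFa⟩, hcxFb⟩ := hcxA
  obtain ⟨⟨⟨hczy₁, hczc, hczd⟩, hczFc⟩, hczFd⟩ := hczB
  -- the new coloring
  set ψ : V → Fin 9 := fun u => if u = x then cx else if u = y then cy else
    if u = z then cz else φ u with hψdef
  have hψx : ψ x = cx := by simp [hψdef]
  have hψy : ψ y = cy := by simp [hψdef, Ne.symm hxy']
  have hψz : ψ z = cz := by simp [hψdef, Ne.symm hxz, Ne.symm hyz']
  have hoff : ∀ u, u ∉ ({x, y, z} : Set V) → ψ u = φ u := by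
    intro u hu
    simp only [Set.mem_insert_iff, Set.mem_singleton_iff, not_or] at hu
    simp [hψdef, hu.1, hu.2.1, hu.2.2]
  have hψa : ψ a = φ a := hoff a haS
  have hψb : ψ b = φ b := hoff b hbS
  have hψc : ψ c = φ c := hoff c hcS
  have hψd : ψ d = φ d := hoff d hdS
  have hψy₁ : ψ y₁ = φ y₁ := hoff y₁ hy₁S
  have hψxz : ψ x ≠ ψ z := by rw [hψx, hψz]; exact hcxz
  refine ⟨ψ, ?_, ?_⟩
  · -- properness
    have key1 : ∀ w', G.Adj x w' → ψ x ≠ ψ w' := by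
      intro w' hadj
      have : w' ∈ ({y, a, b} : Set V) := by rw [← hNx]; exact hadj
      rcases this with rfl | rfl | rfl
      · rw [hψx, hψy]; exact hcxy
      · rw [hψx, hψa]; exact hcxa
      · rw [hψx, hψb]; exact hcxb
    have key2 : ∀ w', G.Adj y w' → ψ y ≠ ψ w' := by
      intro w' hadj
      have : w' ∈ ({x, z, y₁} : Set V) := by rw [← hNy]; exact hadj
      rcases this with rfl | rfl | rfl
      · rw [hψx, hψy]; exact Ne.symm hcxy
      · rw [hψy, hψz]; exact Ne.symm hczy
      · rw [hψy, hψy₁]; exact hcyy₁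
    have key3 : ∀ w', G.Adj z w' → ψ z ≠ ψ w' := by
      intro w' hadj
      have : w' ∈ ({y, c, d} : Set V) := by rw [← hNz]; exact hadj
      rcases this with rfl | rfl | rfl
      · rw [hψy, hψz]; exact hczy
      · rw [hψz, hψc]; exact hczc
      · rw [hψz, hψd]; exact hczd
    intro u w huw
    by_cases hux : u = x
    · subst hux; exact key1 w huw
    by_cases huy : u = y
    · subst huy; exact key2 w huw
    by_cases huz : u = z
    · subst huz; exact key3 w huw
    by_cases hwx : w = x
    · subst hwx; exact (key1 u huw.symm).symm
    by_cases hwy : w = y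
    · subst hwy; exact (key2 u huw.symm).symm
    by_cases hwz : w = z
    · subst hwz; exact (key3 u huw.symm).symm
    · have huS : u ∉ ({x, y, z} : Set V) := by
        rintro (rfl | rfl | rfl)
        exacts [hux rfl, huy rfl, huz rfl]
      have hwS : w ∉ ({x, y, z} : Set V) := by
        rintro (rfl | rfl | rfl)
        exacts [hwx rfl, hwy rfl, hwz rfl]
      rw [hoff u huS, hoff w hwS]
      exact hproper (by simp only [SimpleGraph.reduce]; exact ⟨huS, hwS, huw.ne, Or.inl huw⟩)
  · -- the PCF condition
    intro v
    by_cases hvx' : v = x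
    · rw [hvx']
      rw [hdx]
      have hm : min 2 3 = 2 := by norm_num
      rw [hm]
      refine PCFAux.two_uc hpab ?_ ?_
      · rw [PCFAux.fiber_singleton (hxa : G.Adj x a) hψa ?_]
        · exact Set.ncard_singleton _
        · intro u hu hne
          have : u ∈ ({y, a, b} : Set V) := by rw [← hNx]; exact hu
          rcases this with rfl | rfl | rfl
          · rw [hψy]; exact hcya
          · exact absurd rfl hne
          · rw [hψb]; exact hpab.symm
      · rw [PCFAux.fiber_singleton (hxb : G.Adj x b) hψb ?_]
        · exact Set.ncard_singleton _
        · intro u hu hne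
          have : u ∈ ({y, a, b} : Set V) := by rw [← hNx]; exact hu
          rcases this with rfl | rfl | rfl
          · rw [hψy]; exact hcyb
          · rw [hψa]; exact hpab
          · exact absurd rfl hne
    by_cases hvy' : v = y
    · rw [hvy']
      rw [hdy]
      have hm : min 2 3 = 2 := by norm_num
      rw [hm]
      refine PCFAux.two_uc hcxz ?_ ?_
      · rw [PCFAux.fiber_singleton (hxy.symm : G.Adj y x) hψx ?_]
        · exact Set.ncard_singleton _
        · intro u hu hne
          have : u ∈ ({x, z, y₁} : Set V) := by rw [← hNy]; exact hu
          rcases this with rfl | rfl | rfl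
          · exact absurd rfl hne
          · rw [hψz]; exact Ne.symm hcxz
          · rw [hψy₁]; exact Ne.symm hcxy₁
      · rw [PCFAux.fiber_singleton (hyz : G.Adj y z) hψz ?_]
        · exact Set.ncard_singleton _
        · intro u hu hne
          have : u ∈ ({x, z, y₁} : Set V) := by rw [← hNy]; exact hu
          rcases this with rfl | rfl | rfl
          · rw [hψx]; exact hcxz
          · exact absurd rfl hne
          · rw [hψy₁]; exact Ne.symm hczy₁
    by_cases hvz' : v = z
    · rw [hvz']
      rw [hdz]
      have hm : min 2 3 = 2 := by norm_num
      rw [hm]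
      refine PCFAux.two_uc hpcd ?_ ?_
      · rw [PCFAux.fiber_singleton (hzc : G.Adj z c) hψc ?_]
        · exact Set.ncard_singleton _
        · intro u hu hne
          have : u ∈ ({y, c, d} : Set V) := by rw [← hNz]; exact hu
          rcases this with rfl | rfl | rfl
          · rw [hψy]; exact hcyc
          · exact absurd rfl hne
          · rw [hψd]; exact hpcd.symm
      · rw [PCFAux.fiber_singleton (hzd : G.Adj z d) hψd ?_]
        · exact Set.ncard_singleton _
        · intro u hu hne
          have : u ∈ ({y, c, d} : Set V) := by rw [← hNz]; exact hu
          rcases this with rfl | rfl | rfl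
          · rw [hψy]; exact hcyd
          · rw [hψc]; exact hpcd
          · exact absurd rfl hne
    -- now v ∉ {x, y, z}
    have hvS : v ∉ ({x, y, z} : Set V) := by
      rintro (rfl | rfl | rfl)
      exacts [hvx' rfl, hvy' rfl, hvz' rfl]
    by_cases hvy2 : G.Adj v y
    · -- v = y₁ : the special degree-4 vertex
      have hvy₁ : v ∈ ({x, z, y₁} : Set V) := by rw [← hNy]; exact hvy2.symm
      rcases hvy₁ with hh | hh | hh
      · exact absurd hh hvx'
      · exact absurd hh hvz'
      rw [hh]
      exact PCFAux.y1_block φ ψ cy hyy₁ hny₁x hny₁z hNy hy₁S hdy₁ hoff hψy hcyy₁ (hpcfA y₁)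
    by_cases hvx2 : G.Adj v x
    · -- v ∈ {a, b}
      have hvab : v ∈ ({y, a, b} : Set V) := by rw [← hNx]; exact hvx2.symm
      rcases hvab with hh | hh | hh
      · exact absurd hh hvy'
      · -- v = a
        rw [hh]
        refine QA.2 ψ hoff (fun _ => by rw [hψx]; exact hcxFa) ?_ hψxz
        intro haz
        have : a ∈ ({y, c, d} : Set V) := by rw [← hNz]; exact haz.symm
        rcases this with h' | h' | h'
        · exact absurd h'.symm hya
        · rw [hψz, ← tagCA h'.symm]; exact hczFc
        · rw [hψz, ← tagDA h'.symm]; exact hczFd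
      · -- v = b
        rw [hh]
        refine QB.2 ψ hoff (fun _ => by rw [hψx]; exact hcxFb) ?_ hψxz
        intro hbz
        have : b ∈ ({y, c, d} : Set V) := by rw [← hNz]; exact hbz.symm
        rcases this with h' | h' | h'
        · exact absurd h'.symm hyb
        · rw [hψz, ← tagCB h'.symm]; exact hczFc
        · rw [hψz, ← tagDB h'.symm]; exact hczFd
    by_cases hvz2 : G.Adj v z
    · -- v ∈ {c, d}
      have hvcd : v ∈ ({y, c, d} : Set V) := by rw [← hNz]; exact hvz2.symm
      rcases hvcd with hh | hh | hh
      · exact absurd hh hvy'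
      · rw [hh]
        exact QC.2 ψ hoff (fun h' => (hvx2 (by rw [hh]; exact h')).elim)
          (fun _ => by rw [hψz]; exact hczFc) hψxz
      · rw [hh]
        exact QD.2 ψ hoff (fun h' => (hvx2 (by rw [hh]; exact h')).elim)
          (fun _ => by rw [hψz]; exact hczFd) hψxz
    · -- generic vertex : not adjacent to S
      have hgen : {u | (G.reduce {x, y, z}).Adj v u} = {u | G.Adj v u} :=
        PCFAux.reduce_nbhd_generic hvS (by
          rintro s (rfl | rfl | rfl)
          · exact hvx2
          · exact hvy2
          · exact hvz2)
      have hfib : ∀ cc : Fin 9, {u | G.Adj v u ∧ ψ u = cc}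
          = {u | (G.reduce {x, y, z}).Adj v u ∧ φ u = cc} := by
        intro cc
        ext u
        simp only [Set.mem_setOf_eq]
        constructor
        · rintro ⟨hadj, hcol⟩
          have huS : u ∉ ({x, y, z} : Set V) := by
            rintro (rfl | rfl | rfl)
            · exact hvx2 hadj
            · exact hvy2 hadj
            · exact hvz2 hadj
          refine ⟨(by simp only [SimpleGraph.reduce]; exact ⟨hvS, huS, hadj.ne, Or.inl hadj⟩), ?_⟩
          rw [← hoff u huS]; exact hcol
        · rintro ⟨hadj, hcol⟩
          have hadj' : G.Adj v u := by
            have : u ∈ {u | G.Adj v u} := by rw [← hgen]; exact hadj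
            exact this
          have huS : u ∉ ({x, y, z} : Set V) := by
            rintro (rfl | rfl | rfl)
            · exact hvx2 hadj'
            · exact hvy2 hadj'
            · exact hvz2 hadj'
          exact ⟨hadj', by rw [hoff u huS]; exact hcol⟩
      have e2 : {c : Fin 9 | {u | G.Adj v u ∧ ψ u = c}.ncard = 1}
          = {c : Fin 9 | {u | (G.reduce {x, y, z}).Adj v u ∧ φ u = c}.ncard = 1} := by
        ext cc
        simp only [Set.mem_setOf_eq, hfib cc]
      rw [e2, ← hgen]
      exact hpcfA v
end
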